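/- arXiv:2203.10178 — 7 statements merged into one kernel-verified Lean document; each statement's English description precedes it below -/
import Mathlib

section
/- Let M be a probability measure algebra with measure μ, and for n-tuples a, b in M^n let d_P(a,b) = (1/2) Σ_{s ∈ 2^n} μ(p_s △ q_s), where (p_s) and (q_s) are the partitions generated by a and b respectively (with p_s = ⋂_{i<n} a_i^{s(i)}, a_i^0 = a_i, a_i^1 = complement of a_i). Then for all a, b ∈ M^n: max_{i<n} μ(a_i △ b_i) ≤ d_P(a,b) ≤ n·2^{n-1}·max_{i<n} μ(a_i △ b_i). -/
open MeasureTheory Set symmDiff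

/-- The partition element `p_s = ⋂_{i<n} a_i^{s i}`, where `a_i^0 = a_i` and
`a_i^1` is the complement of `a_i`. -/
def partPiece {X : Type*} {n : ℕ} (a : Fin n → Set X) (s : Fin n → Bool) : Set X :=
  ⋂ i, if s i then (a i)ᶜ else a i

/-- The partition metric `d_P(a,b) = (1/2) Σ_{s ∈ 2^n} μ(p_s ∆ q_s)`. -/
noncomputable def dP {X : Type*} [MeasurableSpace X] (μ : Measure X) {n : ℕ}
    (a b : Fin n → Set X) : ℝ :=
  (1 / 2) * ∑ s : Fin n → Bool, (μ (partPiece a s ∆ partPiece b s)).toReal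

lemma mem_partPiece_iff {X : Type*} {n : ℕ} {a : Fin n → Set X} {s : Fin n → Bool} {x : X} :
    x ∈ partPiece a s ↔ ∀ i, (x ∈ a i ↔ s i = false) := by
  simp only [partPiece, mem_iInter]
  refine forall_congr' fun i => ?_
  cases hs : s i <;> simp [hs]

open Classical in
/-- The signature of `x`: the label of the partition piece containing `x`. -/
noncomputable def sig {X : Type*} {n : ℕ} (a : Fin n → Set X) (x : X) : Fin n → Bool :=
  fun i => decide (x ∉ a i)

lemma mem_partPiece_sig {X : Type*} {n : ℕ} (a : Fin n → Set X) (x : X) :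
    x ∈ partPiece a (sig a x) := by
  rw [mem_partPiece_iff]
  intro i
  by_cases h : x ∈ a i <;> simp [sig, h]

lemma sig_eq_of_mem {X : Type*} {n : ℕ} {a : Fin n → Set X} {s t : Fin n → Bool} {x : X}
    (hs : x ∈ partPiece a s) (ht : x ∈ partPiece a t) : s = t := by
  rw [mem_partPiece_iff] at hs ht
  funext i
  have h1 := hs i
  have h2 := ht i
  cases hsi : s i <;> cases hti : t i <;> simp_all

lemma symmDiff_piece_lower {X : Type*} {n : ℕ} (a b : Fin n → Set X) (i : Fin n) (v : Bool) :
    a i ∆ b i ⊆ ⋃ s ∈ Finset.univ.filter (fun s : Fin n → Bool => s i = v),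
      (partPiece a s ∆ partPiece b s) := by
  intro x hx
  classical
  set σ := sig a x with hσ
  set τ := sig b x with hτ
  have hxa := mem_partPiece_sig a x
  have hxb := mem_partPiece_sig b x
  have hστi : σ i ≠ τ i := by
    rcases hx with ⟨hxa', hxb'⟩ | ⟨hxb', hxa'⟩ <;> simp [hσ, hτ, sig, hxa', hxb']
  have hστ : σ ≠ τ := fun h => hστi (by rw [h])
  have h1 : x ∈ partPiece a σ ∆ partPiece b σ :=
    Or.inl ⟨hxa, fun h => hστ (sig_eq_of_mem h hxb)⟩
  have h2 : x ∈ partPiece a τ ∆ partPiece b τ :=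
    Or.inr ⟨hxb, fun h => hστ (sig_eq_of_mem hxa h)⟩
  simp only [mem_iUnion, Finset.mem_filter, Finset.mem_univ, true_and, exists_prop]
  by_cases hv : σ i = v
  · exact ⟨σ, hv, h1⟩
  · refine ⟨τ, ?_, h2⟩
    cases hb : τ i <;> cases v <;> simp_all
      [show σ i ≠ τ i from hστi]
  
lemma symmDiff_piece_upper {X : Type*} {n : ℕ} (a b : Fin n → Set X) (s : Fin n → Bool) :
    partPiece a s ∆ partPiece b s ⊆ ⋃ i, (a i ∆ b i) := by
  intro x hx
  rw [mem_iUnion]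
  rcases hx with ⟨hp, hq⟩ | ⟨hq, hp⟩
  · rw [mem_partPiece_iff] at hp hq
    push_neg at hq
    obtain ⟨i, hi⟩ := hq
    refine ⟨i, ?_⟩
    have := hp i
    cases hsi : s i <;> simp_all [symmDiff_def]
  · rw [mem_partPiece_iff] at hp hq
    push_neg at hp
    obtain ⟨i, hi⟩ := hp
    refine ⟨i, ?_⟩
    have := hq i
    cases hsi : s i <;> simp_all [symmDiff_def]

/-- The partition metric is equivalent to the max (symmetric-difference) metric on tuples:
`max_{i<n} μ(a_i ∆ b_i) ≤ d_P(a,b) ≤ n·2^{n-1}·max_{i<n} μ(a_i ∆ b_i)`. -/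
theorem dP_equiv_max {X : Type*} [MeasurableSpace X] (μ : Measure X) [IsProbabilityMeasure μ]
    {n : ℕ} (a b : Fin n → Set X)
    (ha : ∀ i, MeasurableSet (a i)) (hb : ∀ i, MeasurableSet (b i)) :
    (⨆ i : Fin n, (μ (a i ∆ b i)).toReal) ≤ dP μ a b ∧
      dP μ a b ≤ (n : ℝ) * 2 ^ (n - 1) * ⨆ i : Fin n, (μ (a i ∆ b i)).toReal := by
  classical
  have hfin : ∀ s : Fin n → Bool, μ (partPiece a s ∆ partPiece b s) ≠ ⊤ :=
    fun s => measure_ne_top μ _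
  have hsum : (∑ s : Fin n → Bool, μ (partPiece a s ∆ partPiece b s)).toReal
      = ∑ s : Fin n → Bool, (μ (partPiece a s ∆ partPiece b s)).toReal :=
    ENNReal.toReal_sum (fun s _ => hfin s)
  have hdP_nonneg : 0 ≤ dP μ a b := by
    apply mul_nonneg (by norm_num)
    exact Finset.sum_nonneg (fun s _ => ENNReal.toReal_nonneg)
  constructor
  · -- lower bound
    rcases isEmpty_or_nonempty (Fin n) with hE | hNE
    · rw [Real.iSup_of_isEmpty]
      exact hdP_nonneg
    refine ciSup_le fun i => ?_
    -- 2 * μ(a i ∆ b i) ≤ ∑ s, μ(p_s ∆ q_s) in ℝ≥0∞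
    have key : 2 * μ (a i ∆ b i) ≤ ∑ s : Fin n → Bool, μ (partPiece a s ∆ partPiece b s) := by
      have h1 : μ (a i ∆ b i) ≤ ∑ s ∈ Finset.univ.filter (fun s : Fin n → Bool => s i = false),
          μ (partPiece a s ∆ partPiece b s) :=
        le_trans (measure_mono (symmDiff_piece_lower a b i false)) (measure_biUnion_finset_le _ _)
      have h2 : μ (a i ∆ b i) ≤ ∑ s ∈ Finset.univ.filter (fun s : Fin n → Bool => s i = true),
          μ (partPiece a s ∆ partPiece b s) :=
        le_trans (measure_mono (symmDiff_piece_lower a b i true)) (measure_biUnion_finset_le _ _)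
      have hsplit : ∑ s : Fin n → Bool, μ (partPiece a s ∆ partPiece b s)
          = (∑ s ∈ Finset.univ.filter (fun s : Fin n → Bool => s i = false),
              μ (partPiece a s ∆ partPiece b s))
            + ∑ s ∈ Finset.univ.filter (fun s : Fin n → Bool => s i = true),
              μ (partPiece a s ∆ partPiece b s) := by
        rw [← Finset.sum_filter_add_sum_filter_not Finset.univ
          (fun s : Fin n → Bool => s i = false)]
        congr 1
        apply Finset.sum_congr _ (fun _ _ => rfl)
        apply Finset.filter_congr
        intro s _
        simp
      rw [hsplit, two_mul]
      exact add_le_add h1 h2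
    have hS : (∑ s : Fin n → Bool, μ (partPiece a s ∆ partPiece b s)) ≠ ⊤ := by
      exact ENNReal.sum_ne_top.mpr (fun s _ => hfin s)
    have := ENNReal.toReal_mono hS key
    rw [ENNReal.toReal_mul, hsum] at this
    simp only [ENNReal.toReal_ofNat] at this
    unfold dP
    linarith
  · -- upper bound
    rcases Nat.eq_zero_or_pos n with hn | hn
    · subst hn
      have : dP μ a b = 0 := by
        unfold dP
        rw [Finset.sum_eq_single (fun _ => false)]
        · have : partPiece a (fun _ => false) = partPiece b (fun _ => false) := by
            simp [partPiece, iInter_of_empty]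
          rw [this, symmDiff_self]
          simp
        · intro s _ hs
          exact absurd (funext fun i => i.elim0) hs
        · intro h
          exact absurd (Finset.mem_univ _) h
      rw [this]
      simp
    · have hBdd : BddAbove (Set.range fun i : Fin n => (μ (a i ∆ b i)).toReal) :=
        (Set.finite_range _).bddAbove
      have hsup_nonneg : 0 ≤ ⨆ i : Fin n, (μ (a i ∆ b i)).toReal := by
        haveI : Nonempty (Fin n) := ⟨⟨0, hn⟩⟩
        exact le_ciSup_of_le hBdd (Classical.arbitrary _) ENNReal.toReal_nonneg
      have hterm : ∀ s : Fin n → Bool, (μ (partPiece a s ∆ partPiece b s)).toReal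
          ≤ (n : ℝ) * ⨆ i : Fin n, (μ (a i ∆ b i)).toReal := by
        intro s
        have h1 : μ (partPiece a s ∆ partPiece b s) ≤ ∑ i : Fin n, μ (a i ∆ b i) :=
          le_trans (measure_mono (symmDiff_piece_upper a b s)) (measure_iUnion_fintype_le μ _)
        have h2 : (∑ i : Fin n, μ (a i ∆ b i)) ≠ ⊤ :=
          ENNReal.sum_ne_top.mpr (fun i _ => measure_ne_top μ _)
        have h3 := ENNReal.toReal_mono h2 h1
        rw [ENNReal.toReal_sum (fun i _ => measure_ne_top μ _)] at h3
        refine le_trans h3 ?_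
        calc ∑ i : Fin n, (μ (a i ∆ b i)).toReal
            ≤ ∑ _i : Fin n, ⨆ j : Fin n, (μ (a j ∆ b j)).toReal :=
              Finset.sum_le_sum (fun i _ => le_ciSup hBdd i)
          _ = (n : ℝ) * ⨆ j : Fin n, (μ (a j ∆ b j)).toReal := by
              rw [Finset.sum_const, Finset.card_univ, Fintype.card_fin, nsmul_eq_mul]
      unfold dP
      have hsum_le : ∑ s : Fin n → Bool, (μ (partPiece a s ∆ partPiece b s)).toReal
          ≤ (2 ^ n : ℝ) * ((n : ℝ) * ⨆ i : Fin n, (μ (a i ∆ b i)).toReal) := by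
        calc ∑ s : Fin n → Bool, (μ (partPiece a s ∆ partPiece b s)).toReal
            ≤ ∑ _s : Fin n → Bool, ((n : ℝ) * ⨆ i : Fin n, (μ (a i ∆ b i)).toReal) :=
              Finset.sum_le_sum (fun s _ => hterm s)
          _ = (2 ^ n : ℝ) * ((n : ℝ) * ⨆ i : Fin n, (μ (a i ∆ b i)).toReal) := by
              rw [Finset.sum_const, Finset.card_univ, Fintype.card_fun, Fintype.card_fin,
                Fintype.card_bool, nsmul_eq_mul]
              push_cast
              ring
      have h2n : (2 ^ n : ℝ) = 2 * 2 ^ (n - 1) := by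
        conv_lhs => rw [← Nat.succ_pred_eq_of_pos hn]
        rw [pow_succ, Nat.pred_eq_sub_one]
        ring
      calc (1 / 2) * ∑ s : Fin n → Bool, (μ (partPiece a s ∆ partPiece b s)).toReal
          ≤ (1 / 2) * ((2 ^ n : ℝ) * ((n : ℝ) * ⨆ i : Fin n, (μ (a i ∆ b i)).toReal)) := by
            apply mul_le_mul_of_nonneg_left hsum_le (by norm_num)
        _ = (n : ℝ) * 2 ^ (n - 1) * ⨆ i : Fin n, (μ (a i ∆ b i)).toReal := by
            rw [h2n]; ring
end

section
/- Let G be a Polish group equipped with an additional bi-invariant metric ∂ that refines the topology of G, let k ≥ 1, and suppose ḡ ∈ G^k is such that the ∂-closure of the diagonal conjugacy class G·ḡ = { (hg_1h^{-1},…,hg_kh^{-1}) : h ∈ G } is comeager in G^k. Then for every open neighborhood U of the identity in G and every η > 0, there exists an open neighborhood V of ḡ in G^k such that the η-fattening (U·ḡ)_η = { h̄ ∈ G^k : ∃u∈U, ∂(h̄, u·ḡ) < η } is dense in V. -/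
/-- Let `G` be a Polish group with a bi-invariant metric `∂` refining its topology, extended
to `G^k` by the maximum. If `ḡ ∈ G^k` is such that the `∂`-closure of its diagonal conjugacy
class is comeager in `G^k`, then for every open neighborhood `U` of the identity and every
`η > 0`, the `η`-fattening of `U·ḡ` is dense in some open neighborhood `V` of `ḡ`. -/
theorem fattening_dense_near_metric_generic {G : Type*} [Group G] [TopologicalSpace G]
    [IsTopologicalGroup G] [PolishSpace G] (k : ℕ) (hk : 1 ≤ k)
    (del : G → G → ℝ)
    (hsymm : ∀ g h : G, del g h = del h g)
    (htri : ∀ g h l : G, del g l ≤ del g h + del h l)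
    (hzero : ∀ g h : G, del g h = 0 ↔ g = h)
    (hleft : ∀ g h l : G, del (l * g) (l * h) = del g h)
    (hright : ∀ g h l : G, del (g * l) (h * l) = del g h)
    -- `∂` refines the topology of `G`
    (hfine : ∀ U : Set G, IsOpen U → ∀ g ∈ U, ∃ ε > (0 : ℝ), ∀ h, del h g < ε → h ∈ U)
    (gbar : Fin k → G)
    -- the `∂`-closure of the diagonal conjugacy class of `gbar` is comeager in `G^k`
    (hcomeager :
      {x : Fin k → G | ∀ η > (0 : ℝ), ∃ u : G,
          (⨆ i, del (x i) (u * gbar i * u⁻¹)) < η} ∈ residual (Fin k → G)) :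
    ∀ U : Set G, IsOpen U → (1 : G) ∈ U → ∀ η > (0 : ℝ),
      ∃ V : Set (Fin k → G), IsOpen V ∧ gbar ∈ V ∧
        V ⊆ closure {x : Fin k → G | ∃ u ∈ U,
          (⨆ i, del (x i) (u * gbar i * u⁻¹)) < η} := by
  intro U hU hU1 η hη
  haveI : Nonempty (Fin k) := ⟨⟨0, hk⟩⟩
  haveI : Nonempty G := ⟨1⟩
  letI := TopologicalSpace.upgradeIsCompletelyMetrizable (Fin k → G)
  -- basic facts about sups
  have hle_sup : ∀ (f : Fin k → ℝ) (i : Fin k), f i ≤ ⨆ j, f j :=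
    fun f i => le_ciSup (Set.finite_range f).bddAbove i
  have hsup_lt : ∀ (f : Fin k → ℝ) (c : ℝ), (∀ i, f i < c) → (⨆ i, f i) < c := by
    intro f c hf
    obtain ⟨i, hi⟩ := Finite.exists_max f
    exact lt_of_le_of_lt (ciSup_le hi) (hf i)
  have hconj : ∀ (a b u : G), del (u * a * u⁻¹) (u * b * u⁻¹) = del a b := by
    intro a b u
    rw [hright, hleft]
  -- symmetric neighborhood `U₀` with `U₀⁻¹ * U₀ ⊆ U`
  obtain ⟨W, hWo, hW1, hWU⟩ := exists_open_nhds_one_mul_subset (hU.mem_nhds hU1)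
  set U₀ : Set G := W ∩ W⁻¹ with hU₀def
  have hU₀o : IsOpen U₀ := hWo.inter hWo.inv
  have hU₀1 : (1 : G) ∈ U₀ := ⟨hW1, by simpa using hW1⟩
  have hmulU : ∀ v w : G, v ∈ U₀ → w ∈ U₀ → v⁻¹ * w ∈ U := by
    intro v w hv hw
    exact hWU (Set.mul_mem_mul hv.2 hw.1)
  -- the half-fattening
  set A₀ : Set (Fin k → G) := {x | ∃ u ∈ U₀, (⨆ i, del (x i) (u * gbar i * u⁻¹)) < η / 2}
    with hA₀def
  set S : Set (Fin k → G) := {x | ∀ η' > (0 : ℝ), ∃ u : G,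
      (⨆ i, del (x i) (u * gbar i * u⁻¹)) < η'} with hSdef
  -- countable dense sequence
  obtain ⟨D, hDc, hDd⟩ := TopologicalSpace.exists_countable_dense G
  obtain ⟨dseq, hdseq⟩ := Set.Countable.exists_eq_range hDc hDd.nonempty
  -- translated copies of `A₀`
  set C : G → Set (Fin k → G) := fun d => {x | (fun i => d⁻¹ * x i * d) ∈ A₀} with hCdef
  have hcover : S ⊆ ⋃ n, C (dseq n) := by
    intro x hx
    obtain ⟨u, hu⟩ := hx (η / 2) (by linarith)
    -- pick `d = dseq n` in the open set `u * U₀`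
    have hOopen : IsOpen {g : G | u⁻¹ * g ∈ U₀} :=
      hU₀o.preimage (continuous_const.mul continuous_id)
    have hune : ({g : G | u⁻¹ * g ∈ U₀}).Nonempty := ⟨u, by simpa using hU₀1⟩
    obtain ⟨d, hdD, hdO⟩ := hDd.exists_mem_open hOopen hune
    rw [hdseq] at hdD
    obtain ⟨n, rfl⟩ := hdD
    set d := dseq n
    refine Set.mem_iUnion.mpr ⟨n, ?_⟩
    -- witness `v⁻¹` where `v = u⁻¹ * d ∈ U₀`
    have hv : u⁻¹ * d ∈ U₀ := hdO
    have hvinv : (u⁻¹ * d)⁻¹ ∈ U₀ := ⟨hv.2, by simpa using hv.1⟩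
    refine ⟨(u⁻¹ * d)⁻¹, hvinv, ?_⟩
    have heq : ∀ i, del (d⁻¹ * x i * d) ((u⁻¹ * d)⁻¹ * gbar i * ((u⁻¹ * d)⁻¹)⁻¹)
        = del (x i) (u * gbar i * u⁻¹) := by
      intro i
      have h1 : (u⁻¹ * d)⁻¹ * gbar i * ((u⁻¹ * d)⁻¹)⁻¹
          = d⁻¹ * (u * gbar i * u⁻¹) * (d⁻¹)⁻¹ := by group
      have h2 : d⁻¹ * x i * d = d⁻¹ * x i * (d⁻¹)⁻¹ := by group
      rw [h1, h2, hconj]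
    calc (⨆ i, del (d⁻¹ * x i * d) ((u⁻¹ * d)⁻¹ * gbar i * ((u⁻¹ * d)⁻¹)⁻¹))
        = ⨆ i, del (x i) (u * gbar i * u⁻¹) := by
          exact congrArg _ (funext heq)
      _ < η / 2 := hu
  -- some translate is non-meager
  have hexn : ∃ n, ¬ IsMeagre (C (dseq n)) := by
    by_contra h
    push_neg at h
    have hM : IsMeagre (⋃ n, C (dseq n)) := isMeagre_iUnion h
    have hS : IsMeagre S := hM.mono hcover
    have hmem : (∅ : Set (Fin k → G)) ∈ residual (Fin k → G) := by
      have := Filter.inter_mem hcomeager hS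
      simpa [hSdef] using this
    have hd := dense_of_mem_residual hmem
    simpa using hd.nonempty
  obtain ⟨n, hn⟩ := hexn
  set e : G := dseq n with hedef
  -- closure of `C e` has nonempty interior
  have hMne : (interior (closure (C e))).Nonempty := by
    by_contra h
    rw [Set.not_nonempty_iff_eq_empty] at h
    have hnwd : IsNowhereDense (C e) := h
    refine hn (isMeagre_iff_countable_union_isNowhereDense.mpr ⟨{C e}, ?_, Set.countable_singleton _, by simp⟩)
    intro t ht
    rw [Set.mem_singleton_iff] at ht
    subst ht
    exact hnwd
  obtain ⟨z₀, hz₀⟩ := hMne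
  -- transfer to an open set on which `A₀` is dense
  have hφcont : Continuous fun (x : Fin k → G) (i : Fin k) => e⁻¹ * x i * e :=
    continuous_pi fun i => (continuous_const.mul (continuous_apply i)).mul continuous_const
  have hψcont : Continuous fun (y : Fin k → G) (i : Fin k) => e * y i * e⁻¹ :=
    continuous_pi fun i => (continuous_const.mul (continuous_apply i)).mul continuous_const
  set M : Set (Fin k → G) :=
    {y | (fun i => e * y i * e⁻¹) ∈ interior (closure (C e))} with hMdef
  have hMopen : IsOpen M := isOpen_interior.preimage hψcont
  have hMne' : M.Nonempty := by
    refine ⟨fun i => e⁻¹ * z₀ i * e, ?_⟩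
    have : (fun i => e * (e⁻¹ * z₀ i * e) * e⁻¹) = z₀ := by
      funext i; group
    simpa [hMdef, this] using hz₀
  have hMsub : M ⊆ closure A₀ := by
    intro y hy
    have h1 : (fun i => e * y i * e⁻¹) ∈ closure (C e) := interior_subset hy
    have h2 : closure (C e) ⊆ (fun (x : Fin k → G) (i : Fin k) => e⁻¹ * x i * e) ⁻¹' closure A₀ :=
      hφcont.closure_preimage_subset A₀
    have h3 := h2 h1
    have : (fun i => e⁻¹ * (e * y i * e⁻¹) * e) = y := by funext i; group
    simpa [this] using h3
  -- pick a point of `A₀` inside `M`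
  obtain ⟨y₀, hy₀⟩ := hMne'
  obtain ⟨z, hzM, hzA⟩ := (mem_closure_iff.mp (hMsub hy₀)) M hMopen hy₀
  obtain ⟨v, hvU₀, hvsup⟩ := hzA
  have hzcoord : ∀ i, del (z i) (v * gbar i * v⁻¹) < η / 2 :=
    fun i => lt_of_le_of_lt (hle_sup (fun j => del (z j) (v * gbar j * v⁻¹)) i) hvsup
  -- the final neighborhood
  set ρ : (Fin k → G) → (Fin k → G) :=
    fun x i => z i * (v * gbar i * v⁻¹)⁻¹ * (v * x i * v⁻¹) with hρdef
  set σ : (Fin k → G) → (Fin k → G) :=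
    fun y i => v⁻¹ * ((v * gbar i * v⁻¹) * (z i)⁻¹ * y i) * v with hσdef
  have hρcont : Continuous ρ := by
    refine continuous_pi fun i => ?_
    exact (continuous_const.mul ((continuous_const.mul (continuous_apply i)).mul
      continuous_const))
  have hσcont : Continuous σ := by
    refine continuous_pi fun i => ?_
    exact ((continuous_const.mul (continuous_const.mul (continuous_apply i))).mul
      continuous_const)
  have hσρ : ∀ x, σ (ρ x) = x := by
    intro x; funext i; simp only [hρdef, hσdef]; group
  have hρσ : ∀ y, ρ (σ y) = y := by
    intro y; funext i; simp only [hρdef, hσdef]; group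
  refine ⟨ρ ⁻¹' M, hMopen.preimage hρcont, ?_, ?_⟩
  · have : ρ gbar = z := by funext i; simp only [hρdef]; group
    simpa [Set.mem_preimage, this] using hzM
  · intro x hx
    rw [mem_closure_iff]
    intro O hO hxO
    have hρxM : ρ x ∈ M := hx
    have hO' : IsOpen (M ∩ σ ⁻¹' O) := hMopen.inter (hO.preimage hσcont)
    have hρxO' : ρ x ∈ M ∩ σ ⁻¹' O := ⟨hρxM, by simpa [Set.mem_preimage, hσρ x] using hxO⟩
    obtain ⟨a, haO', haA⟩ := (mem_closure_iff.mp (hMsub hρxM)) _ hO' hρxO'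
    obtain ⟨w, hwU₀, hwsup⟩ := haA
    have hacoord : ∀ i, del (a i) (w * gbar i * w⁻¹) < η / 2 :=
      fun i => lt_of_le_of_lt (hle_sup (fun j => del (a j) (w * gbar j * w⁻¹)) i) hwsup
    refine ⟨σ a, haO'.2, v⁻¹ * w, hmulU v w hvU₀ hwU₀, ?_⟩
    refine hsup_lt _ _ fun i => ?_
    -- rewrite both sides as conjugates by `v⁻¹`
    have h1 : σ a i = (v⁻¹ * ((v * gbar i * v⁻¹) * (z i)⁻¹ * a i)) * v := by
      rfl
    have h2 : (v⁻¹ * w) * gbar i * (v⁻¹ * w)⁻¹ = (v⁻¹ * (w * gbar i * w⁻¹)) * v := by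
      group
    rw [h1, h2, hright, hleft]
    -- triangle inequality
    have htri1 := htri ((v * gbar i * v⁻¹) * (z i)⁻¹ * a i) (a i) (w * gbar i * w⁻¹)
    have hd1 : del ((v * gbar i * v⁻¹) * (z i)⁻¹ * a i) (a i) = del (z i) (v * gbar i * v⁻¹) := by
      have e1 : del ((v * gbar i * v⁻¹) * (z i)⁻¹ * a i) (1 * a i)
          = del ((v * gbar i * v⁻¹) * (z i)⁻¹) 1 := hright _ _ _
      have e2 : del ((v * gbar i * v⁻¹) * (z i)⁻¹ * z i) (1 * z i)
          = del ((v * gbar i * v⁻¹) * (z i)⁻¹) 1 := hright _ _ _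
      have e3 : (v * gbar i * v⁻¹) * (z i)⁻¹ * z i = v * gbar i * v⁻¹ := by group
      rw [e3, one_mul] at e2
      rw [one_mul] at e1
      rw [e1, ← e2]
      exact hsymm _ _
    calc del ((v * gbar i * v⁻¹) * (z i)⁻¹ * a i) (w * gbar i * w⁻¹)
        ≤ del ((v * gbar i * v⁻¹) * (z i)⁻¹ * a i) (a i) + del (a i) (w * gbar i * w⁻¹) :=
          htri1
      _ < η / 2 + η / 2 := by
          rw [hd1]
          exact add_lt_add (hzcoord i) (hacoord i)
      _ = η := by ring
end

section
/- Let Ĝ be the profinite completion of the free group F_k with Haar probability measure μ, and let N be its Boolean algebra of clopen sets. Then (N, μ) is a good measure: for every clopen a and every rational s with 0 ≤ s ≤ μ(a), there exists a clopen b ⊆ a with μ(b) = s. -/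
open MeasureTheory Pointwise ENNReal
open scoped ENNReal

section Aux

variable {G : Type*} [Group G] [TopologicalSpace G] [IsTopologicalGroup G] [CompactSpace G]

/-- Any clopen set in a compact group is invariant under right multiplication by some
open subgroup. -/
lemma exists_openSubgroup_mul_subset [T2Space G] [TotallyDisconnectedSpace G]
    {W : Set G} (hW : IsClopen W) :
    ∃ H : OpenSubgroup G, W * (H : Set G) ⊆ W := by
  obtain ⟨T, hTmem, hTmul⟩ := IsTopologicalGroup.exist_mul_closure_nhds hW
  obtain ⟨U, hUT, hUopen, h1U⟩ := mem_nhds_iff.mp hTmem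
  obtain ⟨C, hCclopen, h1C, hCU⟩ := compact_exists_isClopen_in_isOpen hUopen h1U
  obtain ⟨H, hH⟩ := IsTopologicalGroup.exist_openSubgroup_sub_clopen_nhds_of_one hCclopen h1C
  exact ⟨H, (Set.mul_subset_mul_left ((hH.trans hCU).trans hUT)).trans hTmul⟩

variable [MeasurableSpace G] [BorelSpace G]
  (μ : Measure G) [IsProbabilityMeasure μ] [μ.IsMulLeftInvariant]

lemma fiber_eq (L : Subgroup G) (g : G) :
    (QuotientGroup.mk (s := L)) ⁻¹' {(g : G ⧸ L)} = (g⁻¹ * ·) ⁻¹' (L : Set G) := by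
  ext x
  simp only [Set.mem_preimage, Set.mem_singleton_iff, SetLike.mem_coe]
  rw [QuotientGroup.eq]
  constructor
  · intro h; simpa using L.inv_mem h
  · intro h; simpa using L.inv_mem h

lemma measure_fiber (L : Subgroup G) (c : G ⧸ L) :
    μ ((QuotientGroup.mk (s := L)) ⁻¹' {c}) = μ (L : Set G) := by
  induction c using QuotientGroup.induction_on with
  | H g => rw [fiber_eq, measure_preimage_mul]

lemma measure_preimage_quotient (L : Subgroup G) (hL : IsOpen (L : Set G))
    [Fintype (G ⧸ L)] (S : Finset (G ⧸ L)) :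
    μ ((QuotientGroup.mk (s := L)) ⁻¹' (S : Set (G ⧸ L))) = S.card * μ (L : Set G) := by
  have hmeas : ∀ c : G ⧸ L, MeasurableSet ((QuotientGroup.mk (s := L)) ⁻¹' {c}) := by
    intro c
    induction c using QuotientGroup.induction_on with
    | H g =>
      rw [fiber_eq]
      exact (hL.preimage (continuous_mul_left g⁻¹)).measurableSet
  have : (QuotientGroup.mk (s := L)) ⁻¹' (S : Set (G ⧸ L)) =
      ⋃ c ∈ S, (QuotientGroup.mk (s := L)) ⁻¹' {c} := by
    ext x; simp
  rw [this, measure_biUnion_finset ?_ (fun c _ => hmeas c)]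
  · simp [measure_fiber, Finset.sum_const, nsmul_eq_mul]
  · intro c _ d _ hcd
    exact Set.disjoint_left.mpr fun x hx hx' => hcd (hx.symm.trans hx')

lemma measure_open_subgroup (L : Subgroup G) (hL : IsOpen (L : Set G)) [Fintype (G ⧸ L)] :
    μ (L : Set G) = ((Fintype.card (G ⧸ L) : ℝ≥0∞))⁻¹ := by
  have h := measure_preimage_quotient μ L hL (Finset.univ)
  simp only [Finset.coe_univ, Set.preimage_univ, Finset.card_univ] at h
  have hcard : (Fintype.card (G ⧸ L) : ℝ≥0∞) ≠ 0 := by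
    simp [Fintype.card_ne_zero]
  have h1 : μ (Set.univ : Set G) = 1 := measure_univ
  rw [h1] at h
  calc μ (L : Set G) = (Fintype.card (G ⧸ L) : ℝ≥0∞)⁻¹ *
        ((Fintype.card (G ⧸ L) : ℝ≥0∞) * μ (L : Set G)) := by
        rw [← mul_assoc, ENNReal.inv_mul_cancel hcard (by simp), one_mul]
    _ = (Fintype.card (G ⧸ L) : ℝ≥0∞)⁻¹ := by rw [← h, mul_one]

end Aux

/-- Let `G` be a profinite group having open normal subgroups of every finite index — such
as the profinite completion of a finitely generated free group — with Haar probability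
measure `μ`. Then the clopen algebra of `G` with `μ` is a good measure: for every clopen
`a` and every rational `s` with `0 ≤ s ≤ μ(a)`, there is a clopen `b ⊆ a` with `μ(b) = s`. -/
theorem haar_clopen_good_measure {G : Type*} [Group G] [TopologicalSpace G]
    [IsTopologicalGroup G] [CompactSpace G] [T2Space G] [TotallyDisconnectedSpace G]
    [MeasurableSpace G] [BorelSpace G]
    (μ : Measure G) [IsProbabilityMeasure μ] [μ.IsMulLeftInvariant] [μ.Regular]
    (hidx : ∀ n : ℕ, 0 < n →
      ∃ H : Subgroup G, H.Normal ∧ IsOpen (H : Set G) ∧ H.index = n) :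
    ∀ a : Set G, IsClopen a → ∀ s : ℚ, 0 ≤ s → ENNReal.ofReal (s : ℝ) ≤ μ a →
      ∃ b : Set G, IsClopen b ∧ b ⊆ a ∧ μ b = ENNReal.ofReal (s : ℝ) := by
  intro a ha s hs hsa
  classical
  -- invariance subgroup
  obtain ⟨H, hHinv⟩ := exists_openSubgroup_mul_subset ha
  obtain ⟨K, _, hKopen, hKidx⟩ := hidx s.den s.pos
  set L : Subgroup G := H.toSubgroup ⊓ K with hLdef
  have hLopen : IsOpen (L : Set G) := by
    exact H.isOpen.inter hKopen
  have : Finite (G ⧸ L) := Subgroup.quotient_finite_of_isOpen L hLopen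
  have : Fintype (G ⧸ L) := Fintype.ofFinite _
  set m := Fintype.card (G ⧸ L) with hm
  have hmidx : L.index = m := by
    rw [Subgroup.index, Nat.card_eq_fintype_card]
  have hm0 : 0 < m := Fintype.card_pos
  have hdvd : s.den ∣ m := by
    rw [← hmidx, ← hKidx]
    exact Subgroup.index_dvd_of_le inf_le_right
  set π : G → G ⧸ L := QuotientGroup.mk with hπ
  -- a is saturated
  have hsat : π ⁻¹' (π '' a) = a := by
    apply Set.Subset.antisymm
    · rintro x ⟨y, hy, hxy⟩
      have : y⁻¹ * x ∈ L := by
        rw [← QuotientGroup.eq]; exact hxy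
      have : x ∈ a * (H : Set G) :=
        ⟨y, hy, y⁻¹ * x, this.1, by group⟩
      exact hHinv this
    · exact Set.subset_preimage_image π a
  have hπmeasA : ∀ S : Finset (G ⧸ L), μ (π ⁻¹' (S : Set (G ⧸ L))) = S.card * (m : ℝ≥0∞)⁻¹ := by
    intro S
    rw [measure_preimage_quotient μ L hLopen S, measure_open_subgroup μ L hLopen]
  have hπclopen : ∀ S : Finset (G ⧸ L), IsClopen (π ⁻¹' (S : Set (G ⧸ L))) := by
    have hopen : ∀ S : Finset (G ⧸ L), IsOpen (π ⁻¹' (S : Set (G ⧸ L))) := by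
      intro S
      have : π ⁻¹' (S : Set (G ⧸ L)) = ⋃ c ∈ S, π ⁻¹' {c} := by ext x; simp
      rw [this]
      apply isOpen_biUnion
      intro c _
      induction c using QuotientGroup.induction_on with
      | H g =>
        rw [hπ, fiber_eq]
        exact hLopen.preimage (continuous_mul_left g⁻¹)
    intro S
    refine ⟨⟨?_⟩, hopen S⟩
    have : (π ⁻¹' (S : Set (G ⧸ L)))ᶜ = π ⁻¹' ((Sᶜ : Finset (G ⧸ L)) : Set (G ⧸ L)) := by
      ext x; simp
    rw [this]
    exact hopen _
  -- the image finset
  set A : Finset (G ⧸ L) := (Set.toFinite (π '' a)).toFinset with hA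
  have hAcoe : (A : Set (G ⧸ L)) = π '' a := by
    rw [hA, Set.Finite.coe_toFinset]
  have hμa : μ a = A.card * (m : ℝ≥0∞)⁻¹ := by
    rw [← hsat, ← hAcoe, hπmeasA]
  set j : ℕ := s.num.toNat * (m / s.den) with hj
  have hdivt : ∃ t : ℕ, 0 < t ∧ m / s.den = t ∧ m = s.den * t := by
    obtain ⟨t, ht⟩ := hdvd
    have ht0 : 0 < t := by
      rcases Nat.eq_zero_or_pos t with h | h
      · exfalso; rw [h, mul_zero] at ht; omega
      · exact h
    exact ⟨t, ht0, by rw [ht, Nat.mul_div_cancel_left _ s.pos], ht⟩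
  obtain ⟨t, ht0, hdivt, ht⟩ := hdivt
  have hq : (j : ℚ) = s * m := by
    have h1 : (s : ℚ) * (s.den : ℚ) = (s.num : ℚ) := Rat.mul_den_eq_num s
    rw [hj, hdivt, ht]
    have h2 : ((s.num.toNat : ℕ) : ℚ) = ((s.num : ℤ) : ℚ) := by
      norm_cast
      exact Int.toNat_of_nonneg (Rat.num_nonneg.mpr hs)
    push_cast
    rw [h2, ← h1]
    ring
  have hsj : (s : ℝ) = (j : ℝ) / (m : ℝ) := by
    have hmq : (m : ℚ) ≠ 0 := by positivity
    have h2 : s = (j : ℚ) / (m : ℚ) := by rw [hq]; field_simp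
    rw [h2]; push_cast; ring
  have hofReal : ENNReal.ofReal (s : ℝ) = (j : ℝ≥0∞) * (m : ℝ≥0∞)⁻¹ := by
    rw [hsj, ENNReal.ofReal_div_of_pos (by positivity), ENNReal.ofReal_natCast,
      ENNReal.ofReal_natCast, div_eq_mul_inv]
  have hjA : j ≤ A.card := by
    have h1 : (j : ℝ≥0∞) * (m : ℝ≥0∞)⁻¹ ≤ (A.card : ℝ≥0∞) * (m : ℝ≥0∞)⁻¹ := by
      rw [← hofReal, ← hμa]; exact hsa
    have h2 : (j : ℝ≥0∞) ≤ (A.card : ℝ≥0∞) := by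
      have := ENNReal.mul_le_mul_iff_left (a := (j : ℝ≥0∞)) (b := (A.card : ℝ≥0∞))
        (c := (m : ℝ≥0∞)⁻¹) (by simp [hm0.ne']) (by simp [hm0.ne'])
      exact this.mp h1
    exact_mod_cast h2
  obtain ⟨B, hBA, hBcard⟩ := Finset.exists_subset_card_eq hjA
  refine ⟨π ⁻¹' (B : Set (G ⧸ L)), hπclopen B, ?_, ?_⟩
  · calc π ⁻¹' (B : Set (G ⧸ L)) ⊆ π ⁻¹' (A : Set (G ⧸ L)) :=
          Set.preimage_mono (by exact_mod_cast hBA)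
      _ = a := by rw [hAcoe, hsat]
  · rw [hπmeasA, hBcard, hofReal]
end

section
/- Let G be a Polish group acting continuously on a Polish space Z (e.g., Z = G^k with diagonal conjugation), and let z ∈ Z have dense orbit G·z. Equip Z additionally with a G-invariant metric ∂ refining its topology. If the ∂-closure of G·z is comeager in Z, then for every identity neighborhood U ⊆ G and η > 0 there is a nonempty open V ⊆ Z in which (U·z)_η is dense; consequently some translate of (W·z)_{η/2}, for W open with W^{-1}W ⊆ U, is non-meager. -/
/-- Let a Polish group `G` act continuously on a Polish space `Z`, let `∂` be a `G`-invariant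
metric on `Z` refining its topology, and let `z ∈ Z` have dense orbit. If the `∂`-closure of
`G·z` is comeager in `Z`, then for every identity neighborhood `U ⊆ G` and `η > 0` there is
a nonempty open `V ⊆ Z` in which the fattening `(U·z)_η` is dense; consequently, for every
open `W` with `W⁻¹W ⊆ U` such that `G` is covered by countably many left translates of `W`,
some translate of `(W·z)_{η/2}` is non-meager. -/
theorem dense_fattening_and_nonmeager_translate {G : Type*} [Group G] [TopologicalSpace G]
    [IsTopologicalGroup G] [PolishSpace G]
    {Z : Type*} [TopologicalSpace Z] [PolishSpace Z] [MulAction G Z]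
    (hcont : Continuous fun p : G × Z => p.1 • p.2)
    (del : Z → Z → ℝ)
    (hsymm : ∀ y y' : Z, del y y' = del y' y)
    (htri : ∀ y y' y'' : Z, del y y'' ≤ del y y' + del y' y'')
    (hzero : ∀ y y' : Z, del y y' = 0 ↔ y = y')
    (hinv : ∀ (g : G) (y y' : Z), del (g • y) (g • y') = del y y')
    (hfine : ∀ O : Set Z, IsOpen O → ∀ y ∈ O, ∃ ε > (0 : ℝ), ∀ y', del y' y < ε → y' ∈ O)
    (z : Z) (hdense : Dense {y : Z | ∃ g : G, g • z = y})
    (hcomeager : {y : Z | ∀ η > (0 : ℝ), ∃ g : G, del y (g • z) < η} ∈ residual Z) :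
    ∀ U : Set G, U ∈ nhds (1 : G) → ∀ η > (0 : ℝ),
      (∃ V : Set Z, IsOpen V ∧ V.Nonempty ∧
          V ⊆ closure {y : Z | ∃ u ∈ U, del y (u • z) < η}) ∧
      (∀ W : Set G, IsOpen W → W.Nonempty → (∀ w ∈ W, ∀ w' ∈ W, w⁻¹ * w' ∈ U) →
        ∀ gs : ℕ → G, (∀ x : G, ∃ n, ∃ w ∈ W, x = gs n * w) →
          ∃ n : ℕ, ¬ IsMeagre
            ((fun y => gs n • y) '' {y : Z | ∃ w ∈ W, del y (w • z) < η / 2})) := by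
  haveI : ContinuousSMul G Z := ⟨hcont⟩
  haveI : Nonempty Z := ⟨z⟩
  letI := TopologicalSpace.upgradeIsCompletelyMetrizable Z
  intro U hU η hη
  set C : Set Z := {y : Z | ∀ η > (0 : ℝ), ∃ g : G, del y (g • z) < η} with hC
  -- Key claim: for any W and any countable family of translates covering G,
  -- some translate of the η/2-fattening of W•z is non-meagre.
  have key : ∀ W : Set G, ∀ gs : ℕ → G, (∀ x : G, ∃ n, ∃ w ∈ W, x = gs n * w) →
      ∃ n : ℕ, ¬ IsMeagre
        ((fun y => gs n • y) '' {y : Z | ∃ w ∈ W, del y (w • z) < η / 2}) := by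
    intro W gs hcov
    by_contra h
    push_neg at h
    have hmeag : IsMeagre (⋃ n, (fun y => gs n • y) ''
        {y : Z | ∃ w ∈ W, del y (w • z) < η / 2}) := isMeagre_iUnion h
    have hsub : C ⊆ ⋃ n, (fun y => gs n • y) ''
        {y : Z | ∃ w ∈ W, del y (w • z) < η / 2} := by
      intro y hy
      obtain ⟨g, hg⟩ := hy (η / 2) (by linarith)
      obtain ⟨n, w, hw, hx⟩ := hcov g
      refine Set.mem_iUnion.2 ⟨n, (gs n)⁻¹ • y, ⟨w, hw, ?_⟩, by simp⟩
      have : del ((gs n)⁻¹ • y) (w • z) = del y (g • z) := by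
        rw [← hinv (gs n) ((gs n)⁻¹ • y) (w • z), smul_inv_smul, smul_smul, ← hx]
      rwa [this]
    have hres : C ∩ (⋃ n, (fun y => gs n • y) ''
        {y : Z | ∃ w ∈ W, del y (w • z) < η / 2})ᶜ ∈ residual Z :=
      Filter.inter_mem hcomeager hmeag
    have : Dense (C ∩ (⋃ n, (fun y => gs n • y) ''
        {y : Z | ∃ w ∈ W, del y (w • z) < η / 2})ᶜ) := dense_of_mem_residual hres
    obtain ⟨y, hy1, hy2⟩ := this.nonempty
    exact hy2 (hsub hy1)
  constructor
  · -- Construct W and a covering sequence.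
    obtain ⟨W, hWopen, hW1, hWU⟩ : ∃ W : Set G, IsOpen W ∧ (1 : G) ∈ W ∧
        ∀ w ∈ W, ∀ w' ∈ W, w⁻¹ * w' ∈ U := by
      have hc : ContinuousAt (fun p : G × G => p.1⁻¹ * p.2) (1, 1) := by fun_prop
      have : (fun p : G × G => p.1⁻¹ * p.2) ⁻¹' U ∈ nhds ((1 : G), (1 : G)) := by
        apply hc
        simpa using hU
      rw [mem_nhds_prod_iff'] at this
      obtain ⟨s, t, hs, h1s, ht, h1t, hst⟩ := this
      exact ⟨s ∩ t, hs.inter ht, ⟨h1s, h1t⟩, fun w hw w' hw' =>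
        hst (Set.mk_mem_prod hw.1 hw'.2)⟩
    haveI : Nonempty G := ⟨1⟩
    set gs : ℕ → G := TopologicalSpace.denseSeq G with hgs
    have hcov : ∀ x : G, ∃ n, ∃ w ∈ W, x = gs n * w := by
      intro x
      have hopen : IsOpen {g : G | g⁻¹ * x ∈ W} :=
        hWopen.preimage (by fun_prop : Continuous fun g : G => g⁻¹ * x)
      have hne : {g : G | g⁻¹ * x ∈ W}.Nonempty := ⟨x, by simpa using hW1⟩
      obtain ⟨n, hn⟩ := (TopologicalSpace.denseRange_denseSeq G).exists_mem_open hopen hne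
      exact ⟨n, (gs n)⁻¹ * x, hn, by group⟩
    obtain ⟨n, hn⟩ := key W gs hcov
    set S : Set Z := (fun y => gs n • y) '' {y : Z | ∃ w ∈ W, del y (w • z) < η / 2} with hS
    have hint : (interior (closure S)).Nonempty := by
      by_contra hemp
      rw [Set.not_nonempty_iff_eq_empty] at hemp
      apply hn
      have : (closure S)ᶜ ∈ residual Z :=
        residual_of_dense_open isClosed_closure.isOpen_compl
          (by rwa [← interior_eq_empty_iff_dense_compl])
      exact Filter.mem_of_superset this
        (Set.compl_subset_compl.2 subset_closure)
    set φ : Z ≃ₜ Z := Homeomorph.smul ((gs n)⁻¹ : G) with hφ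
    -- use w₀ = 1 ∈ W
    refine ⟨φ '' interior (closure S), φ.isOpenMap _ isOpen_interior,
      hint.image _, ?_⟩
    have hSA : φ '' S ⊆ {y : Z | ∃ u ∈ U, del y (u • z) < η} := by
      rintro _ ⟨_, ⟨x, ⟨w, hw, hx⟩, rfl⟩, rfl⟩
      refine ⟨(1 : G)⁻¹ * w, hWU 1 hW1 w hw, ?_⟩
      show del ((gs n)⁻¹ • gs n • x) (((1 : G)⁻¹ * w) • z) < η
      rw [inv_smul_smul, inv_one, one_mul]
      linarith
    intro y hy
    obtain ⟨x, hx, rfl⟩ := hy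
    have h1 : φ x ∈ closure (φ '' S) := by
      rw [← φ.image_closure]
      exact ⟨x, interior_subset hx, rfl⟩
    exact closure_mono hSA h1
  · intro W _ _ _ gs hcov
    exact key W gs hcov
end

section
/- Let N be a countable atomless Boolean algebra equipped with a finitely additive probability measure μ taking exactly the values ℚ ∩ [0,1] and which is a good measure (for every a ∈ N and rational s ∈ [0, μ(a)] there is b ≤ a with μ(b) = s). Then any two such measured Boolean algebras are isomorphic via a measure-preserving Boolean isomorphism (uniqueness of the Fraïssé limit of finite rational-valued measure algebras), and moreover N is ultrahomogeneous: every measure-preserving isomorphism between finite subalgebras extends to a measure-preserving automorphism of N. -/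
attribute [local instance] Classical.propDecidable

/-- A countable atomless Boolean algebra with a strictly positive, finitely additive
probability measure taking exactly the rational values in `[0,1]` and which is a good
measure. This is (an axiomatization of) the Fraïssé limit of finite measured Boolean
algebras with rational-valued measures. -/
def IsGoodRationalMeasureAlgebra (N : Type*) [BooleanAlgebra N] (μ : N → ℝ) : Prop :=
  μ ⊥ = 0 ∧ μ ⊤ = 1 ∧
  (∀ a b : N, Disjoint a b → μ (a ⊔ b) = μ a + μ b) ∧
  (∀ a : N, a ≠ ⊥ → 0 < μ a) ∧
  (∀ a : N, ¬ IsAtom a) ∧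
  (∀ a : N, ∃ q : ℚ, μ a = (q : ℝ)) ∧
  (∀ q : ℚ, 0 ≤ (q : ℝ) → (q : ℝ) ≤ 1 → ∃ a : N, μ a = (q : ℝ)) ∧
  (∀ a : N, ∀ q : ℚ, 0 ≤ (q : ℝ) → (q : ℝ) ≤ μ a → ∃ b : N, b ≤ a ∧ μ b = (q : ℝ))

namespace GMPAux

variable {N N' : Type*} [BooleanAlgebra N] [BooleanAlgebra N'] {μ : N → ℝ} {μ' : N' → ℝ}

section MeasLemmas

variable (hN : IsGoodRationalMeasureAlgebra N μ)
include hN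

theorem mu_bot : μ ⊥ = 0 := hN.1

theorem mu_nonneg (a : N) : 0 ≤ μ a := by
  rcases eq_or_ne a ⊥ with rfl | h
  · rw [hN.1]
  · exact (hN.2.2.2.1 a h).le

theorem eq_bot_of_mu (a : N) (h : μ a = 0) : a = ⊥ := by
  by_contra hb
  exact absurd h (ne_of_gt (hN.2.2.2.1 a hb))

theorem mu_mono {a b : N} (h : a ≤ b) : μ a ≤ μ b := by
  have hd : Disjoint a (b \ a) := disjoint_sdiff_self_right
  have : μ b = μ a + μ (b \ a) := by rw [← hN.2.2.1 a (b \ a) hd, sup_sdiff_cancel_right h]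
  rw [this]
  linarith [mu_nonneg hN (b \ a)]

theorem mu_sdiff {a b : N} (h : a ≤ b) : μ (b \ a) = μ b - μ a := by
  have hd : Disjoint a (b \ a) := disjoint_sdiff_self_right
  have : μ b = μ a + μ (b \ a) := by rw [← hN.2.2.1 a (b \ a) hd, sup_sdiff_cancel_right h]
  linarith

theorem mu_sup_sum {ι : Type*} (F : Finset ι) (h : ι → N)
    (hd : ∀ p ∈ F, ∀ q ∈ F, p ≠ q → Disjoint (h p) (h q)) :
    μ (F.sup h) = ∑ p ∈ F, μ (h p) := by
  classical
  induction F using Finset.induction_on with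
  | empty => simpa using hN.1
  | @insert a F ha ih =>
      have hdis : Disjoint (h a) (F.sup h) := by
        rw [Finset.disjoint_sup_right]
        intro i hi
        exact hd a (Finset.mem_insert_self a F) i (Finset.mem_insert_of_mem hi)
          (by rintro rfl; exact ha hi)
      rw [Finset.sup_insert, hN.2.2.1 _ _ hdis, Finset.sum_insert ha,
        ih (fun p hp q hq hpq => hd p (Finset.mem_insert_of_mem hp) q
          (Finset.mem_insert_of_mem hq) hpq)]

end MeasLemmas

/-- A finite measure-preserving partial isomorphism given by matched partitions. -/
structure PIso (N N' : Type*) [BooleanAlgebra N] [BooleanAlgebra N']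
    (μ : N → ℝ) (μ' : N' → ℝ) where
  s : Finset (N × N')
  disj1 : ∀ p ∈ s, ∀ q ∈ s, p ≠ q → Disjoint p.1 q.1
  disj2 : ∀ p ∈ s, ∀ q ∈ s, p ≠ q → Disjoint p.2 q.2
  sup1 : s.sup Prod.fst = ⊤
  sup2 : s.sup Prod.snd = ⊤
  meas : ∀ p ∈ s, μ p.1 = μ' p.2

namespace PIso

noncomputable def symm (P : PIso N N' μ μ') : PIso N' N μ' μ where
  s := P.s.image Prod.swap
  disj1 := by
    simp only [Finset.mem_image]
    rintro p ⟨p', hp', rfl⟩ q ⟨q', hq', rfl⟩ hne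
    exact P.disj2 p' hp' q' hq' (fun h => hne (by rw [h]))
  disj2 := by
    simp only [Finset.mem_image]
    rintro p ⟨p', hp', rfl⟩ q ⟨q', hq', rfl⟩ hne
    exact P.disj1 p' hp' q' hq' (fun h => hne (by rw [h]))
  sup1 := by rw [Finset.sup_image]; exact P.sup2
  sup2 := by rw [Finset.sup_image]; exact P.sup1
  meas := by
    simp only [Finset.mem_image]
    rintro p ⟨p', hp', rfl⟩
    exact (P.meas p' hp').symm

noncomputable def map (P : PIso N N' μ μ') (x : N) : N' :=
  (P.s.filter (fun p => p.1 ≤ x)).sup Prod.snd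

def mem (P : PIso N N' μ μ') (x : N) : Prop :=
  x ≤ (P.s.filter (fun p => p.1 ≤ x)).sup Prod.fst

theorem ext' {P Q : PIso N N' μ μ'} (h : P.s = Q.s) : P = Q := by
  cases P; cases Q; cases h; rfl

theorem symm_symm (P : PIso N N' μ μ') : P.symm.symm = P := by
  apply ext'
  show (P.s.image Prod.swap).image Prod.swap = P.s
  rw [Finset.image_image]
  simp

theorem symm_map (P : PIso N N' μ μ') (y : N') :
    P.symm.map y = (P.s.filter (fun p => p.2 ≤ y)).sup Prod.fst := by
  show ((P.s.image Prod.swap).filter _).sup Prod.snd = _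
  rw [Finset.filter_image, Finset.sup_image]
  rfl

theorem symm_mem (P : PIso N N' μ μ') (y : N') :
    P.symm.mem y ↔ y ≤ (P.s.filter (fun p => p.2 ≤ y)).sup Prod.snd := by
  show y ≤ ((P.s.image Prod.swap).filter _).sup Prod.fst ↔ _
  rw [Finset.filter_image, Finset.sup_image]
  rfl

theorem mem_sup_eq (P : PIso N N' μ μ') {x : N} (hx : P.mem x) :
    (P.s.filter (fun p => p.1 ≤ x)).sup Prod.fst = x :=
  le_antisymm (Finset.sup_le fun p hp => (Finset.mem_filter.mp hp).2) hx

theorem map_measure (hN : IsGoodRationalMeasureAlgebra N μ)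
    (hN' : IsGoodRationalMeasureAlgebra N' μ') (P : PIso N N' μ μ') {x : N} (hx : P.mem x) :
    μ' (P.map x) = μ x := by
  have h1 : μ x = ∑ p ∈ P.s.filter (fun p => p.1 ≤ x), μ p.1 := by
    conv_lhs => rw [← mem_sup_eq P hx]
    exact mu_sup_sum hN _ _ (fun p hp q hq hpq =>
      P.disj1 p (Finset.mem_of_mem_filter p hp) q (Finset.mem_of_mem_filter q hq) hpq)
  have h2 : μ' (P.map x) = ∑ p ∈ P.s.filter (fun p => p.1 ≤ x), μ' p.2 :=
    mu_sup_sum hN' _ _ (fun p hp q hq hpq =>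
      P.disj2 p (Finset.mem_of_mem_filter p hp) q (Finset.mem_of_mem_filter q hq) hpq)
  rw [h1, h2]
  exact Finset.sum_congr rfl fun p hp => (P.meas p (Finset.mem_of_mem_filter p hp)).symm

theorem mem_map_symm (P : PIso N N' μ μ') {x : N} (hx : P.mem x) : P.symm.mem (P.map x) := by
  rw [symm_mem]
  show (P.s.filter (fun p => p.1 ≤ x)).sup Prod.snd ≤ _
  apply Finset.sup_mono
  intro p hp
  rw [Finset.mem_filter] at hp ⊢
  exact ⟨hp.1, Finset.le_sup (f := Prod.snd) (Finset.mem_filter.mpr hp)⟩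

theorem map_symm_map (hN : IsGoodRationalMeasureAlgebra N μ)
    (hN' : IsGoodRationalMeasureAlgebra N' μ') (P : PIso N N' μ μ') {x : N} (hx : P.mem x) :
    P.symm.map (P.map x) = x := by
  rw [symm_map]
  apply le_antisymm
  · apply Finset.sup_le
    intro p hp
    rw [Finset.mem_filter] at hp
    by_cases hpF : p.1 ≤ x
    · exact hpF
    · -- p.2 ≤ P.map x but p not in the filter; show p.1 = ⊥
      have hpd : Disjoint p.2 (P.map x) := by
        rw [PIso.map, Finset.disjoint_sup_right]
        intro q hq
        rw [Finset.mem_filter] at hq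
        refine P.disj2 p hp.1 q hq.1 ?_
        rintro rfl; exact hpF hq.2
      have : p.2 = ⊥ := hpd.eq_bot_of_le hp.2
      have : μ p.1 = 0 := by rw [P.meas p hp.1, this, mu_bot hN']
      rw [eq_bot_of_mu hN _ this]
      exact bot_le
  · calc x ≤ (P.s.filter (fun p => p.1 ≤ x)).sup Prod.fst := hx
      _ ≤ _ := by
        apply Finset.sup_mono
        intro p hp
        rw [Finset.mem_filter] at hp ⊢
        exact ⟨hp.1, Finset.le_sup (f := Prod.snd) (Finset.mem_filter.mpr hp)⟩

theorem map_mono (P : PIso N N' μ μ') {x y : N} (h : x ≤ y) : P.map x ≤ P.map y := by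
  apply Finset.sup_mono
  intro p hp
  rw [Finset.mem_filter] at hp ⊢
  exact ⟨hp.1, hp.2.trans h⟩

def Refines (P' P : PIso N N' μ μ') : Prop :=
  ∀ x, P.mem x → P'.mem x ∧ P'.map x = P.map x

theorem Refines.refl (P : PIso N N' μ μ') : Refines P P := fun _ hx => ⟨hx, rfl⟩

theorem Refines.trans {P'' P' P : PIso N N' μ μ'} (h2 : Refines P'' P') (h1 : Refines P' P) :
    Refines P'' P := fun x hx =>
  ⟨(h2 x (h1 x hx).1).1, ((h2 x (h1 x hx).1).2).trans (h1 x hx).2⟩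

theorem Refines.symm (hN : IsGoodRationalMeasureAlgebra N μ)
    (hN' : IsGoodRationalMeasureAlgebra N' μ') {P' P : PIso N N' μ μ'} (h : Refines P' P) :
    Refines P'.symm P.symm := by
  intro y hy
  set x := P.symm.map y with hxd
  have hmx : P.mem x := by
    have := mem_map_symm P.symm hy
    rwa [symm_symm] at this
  have hyx : P.map x = y := by
    have := map_symm_map hN' hN P.symm hy
    rwa [symm_symm] at this
  obtain ⟨hm', he'⟩ := h x hmx
  have h1 : P'.symm.mem y := by
    have := mem_map_symm P' hm'
    rwa [he', hyx] at this
  refine ⟨h1, ?_⟩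
  have h2 : P'.symm.map y = x := by
    conv_lhs => rw [← hyx, ← he']
    exact map_symm_map hN hN' P' hm'
  rw [h2, hxd]

theorem refines_of_sub (hN : IsGoodRationalMeasureAlgebra N μ)
    (hN' : IsGoodRationalMeasureAlgebra N' μ') {P' P : PIso N N' μ μ'}
    (h : ∀ q ∈ P'.s, ∃ p ∈ P.s, q.1 ≤ p.1 ∧ q.2 ≤ p.2) : Refines P' P := by
  intro x hx
  have hxF : (P.s.filter (fun p => p.1 ≤ x)).sup Prod.fst = x := mem_sup_eq P hx
  -- Claim 1
  have claim1 : ∀ q ∈ P'.s, q.1 ≤ x → (∃ p ∈ P.s.filter (fun p => p.1 ≤ x), q.1 ≤ p.1 ∧ q.2 ≤ p.2) ∨ (q.1 = ⊥ ∧ q.2 = ⊥) := by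
    intro q hq hqx
    obtain ⟨p, hp, hq1, hq2⟩ := h q hq
    by_cases hpx : p.1 ≤ x
    · exact Or.inl ⟨p, Finset.mem_filter.mpr ⟨hp, hpx⟩, hq1, hq2⟩
    · right
      have hq1b : q.1 = ⊥ := by
        have hb : ((P.s.filter (fun p => p.1 ≤ x)).sup fun r => q.1 ⊓ r.1) ≤ ⊥ := by
          apply Finset.sup_le
          intro r hr
          rw [Finset.mem_filter] at hr
          have hrp : r ≠ p := by rintro rfl; exact hpx hr.2
          have : Disjoint r.1 p.1 := P.disj1 r hr.1 p hp hrp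
          calc q.1 ⊓ r.1 ≤ p.1 ⊓ r.1 := inf_le_inf_right _ hq1
            _ = ⊥ := by rw [inf_comm]; exact disjoint_iff.mp this
            _ ≤ ⊥ := le_rfl
        refine le_bot_iff.mp ?_
        calc q.1 = q.1 ⊓ x := (inf_eq_left.mpr hqx).symm
          _ = (P.s.filter (fun p => p.1 ≤ x)).sup (fun r => q.1 ⊓ r.1) := by
              rw [← Finset.sup_inf_distrib_left, hxF]
          _ ≤ ⊥ := hb
      refine ⟨hq1b, ?_⟩
      apply eq_bot_of_mu hN'
      rw [← P'.meas q hq, hq1b, mu_bot hN]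
  -- Claim 2
  have claim2 : ∀ p ∈ P.s, p.1 ≤ x →
      p.1 ≤ (P'.s.filter (fun q => q.1 ≤ x)).sup Prod.fst ∧
      p.2 ≤ (P'.s.filter (fun q => q.1 ≤ x)).sup Prod.snd := by
    intro p hp hpx
    constructor
    · have h1 : p.1 = P'.s.sup (fun q => p.1 ⊓ q.1) := by
        rw [← Finset.sup_inf_distrib_left, P'.sup1, inf_top_eq]
      rw [h1]
      apply Finset.sup_le
      intro q hq
      obtain ⟨r, hr, hqr1, hqr2⟩ := h q hq
      by_cases hrp : r = p
      · subst hrp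
        have hqx : q.1 ≤ x := le_trans hqr1 hpx
        exact le_trans inf_le_right (Finset.le_sup (f := Prod.fst) (Finset.mem_filter.mpr ⟨hq, hqx⟩))
      · have : Disjoint r.1 p.1 := P.disj1 r hr p hp hrp
        calc p.1 ⊓ q.1 ≤ p.1 ⊓ r.1 := inf_le_inf_left _ hqr1
          _ = ⊥ := by rw [inf_comm]; exact disjoint_iff.mp this
          _ ≤ _ := bot_le
    · have h1 : p.2 = P'.s.sup (fun q => p.2 ⊓ q.2) := by
        rw [← Finset.sup_inf_distrib_left, P'.sup2, inf_top_eq]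
      rw [h1]
      apply Finset.sup_le
      intro q hq
      obtain ⟨r, hr, hqr1, hqr2⟩ := h q hq
      by_cases hrp : r = p
      · subst hrp
        have hqx : q.1 ≤ x := le_trans hqr1 hpx
        exact le_trans inf_le_right (Finset.le_sup (f := Prod.snd) (Finset.mem_filter.mpr ⟨hq, hqx⟩))
      · have : Disjoint r.2 p.2 := P.disj2 r hr p hp hrp
        calc p.2 ⊓ q.2 ≤ p.2 ⊓ r.2 := inf_le_inf_left _ hqr2
          _ = ⊥ := by rw [inf_comm]; exact disjoint_iff.mp this
          _ ≤ _ := bot_le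
  constructor
  · -- P'.mem x
    show x ≤ _
    conv_lhs => rw [← hxF]
    apply Finset.sup_le
    intro p hp
    rw [Finset.mem_filter] at hp
    exact (claim2 p hp.1 hp.2).1
  · -- maps agree
    apply le_antisymm
    · apply Finset.sup_le
      intro q hq
      rw [Finset.mem_filter] at hq
      rcases claim1 q hq.1 hq.2 with ⟨p, hp, _, hq2⟩ | ⟨_, hq2⟩
      · exact le_trans hq2 (Finset.le_sup (f := Prod.snd) hp)
      · rw [hq2]; exact bot_le
    · apply Finset.sup_le
      intro p hp
      rw [Finset.mem_filter] at hp
      exact (claim2 p hp.1 hp.2).2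

theorem exists_extend_aux (hN : IsGoodRationalMeasureAlgebra N μ)
    (hN' : IsGoodRationalMeasureAlgebra N' μ') (P : PIso N N' μ μ') (x : N) (g : N × N' → N')
    (hg : ∀ p ∈ P.s, g p ≤ p.2 ∧ μ' (g p) = μ (x ⊓ p.1)) :
    ∃ P' : PIso N N' μ μ',
      P'.s = P.s.biUnion (fun p => {(x ⊓ p.1, g p), (xᶜ ⊓ p.1, p.2 \ g p)}) ∧
      Refines P' P ∧ P'.mem x := by
  classical
  set s' := P.s.biUnion (fun p => ({(x ⊓ p.1, g p), (xᶜ ⊓ p.1, p.2 \ g p)} : Finset (N × N')))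
    with hs'
  have hmem' : ∀ q ∈ s', ∃ p ∈ P.s, q = (x ⊓ p.1, g p) ∨ q = (xᶜ ⊓ p.1, p.2 \ g p) := by
    intro q hq
    rw [hs', Finset.mem_biUnion] at hq
    obtain ⟨p, hp, hq⟩ := hq
    rw [Finset.mem_insert, Finset.mem_singleton] at hq
    exact ⟨p, hp, hq⟩
  have hcomp : ∀ {w r : N × N'}, (w = (x ⊓ r.1, g r) ∨ w = (xᶜ ⊓ r.1, r.2 \ g r)) → r ∈ P.s →
      w.1 ≤ r.1 ∧ w.2 ≤ r.2 := by
    rintro w r (rfl | rfl) hr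
    · exact ⟨inf_le_right, (hg r hr).1⟩
    · exact ⟨inf_le_right, sdiff_le⟩
  have hle : ∀ q ∈ s', ∃ p ∈ P.s, q.1 ≤ p.1 ∧ q.2 ≤ p.2 := by
    intro q hq
    obtain ⟨p, hp, hq'⟩ := hmem' q hq
    exact ⟨p, hp, hcomp hq' hp⟩
  have hd : ∀ u ∈ s', ∀ v ∈ s', u ≠ v → Disjoint u.1 v.1 ∧ Disjoint u.2 v.2 := by
    intro u hu v hv huv
    obtain ⟨p, hp, hu'⟩ := hmem' u hu
    obtain ⟨q, hq, hv'⟩ := hmem' v hv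
    by_cases hpq : p = q
    · subst hpq
      rcases hu' with rfl | rfl <;> rcases hv' with rfl | rfl
      · exact absurd rfl huv
      · exact ⟨disjoint_compl_right.mono inf_le_left inf_le_left,
          disjoint_sdiff_self_right⟩
      · exact ⟨(disjoint_compl_right.mono inf_le_left inf_le_left).symm,
          disjoint_sdiff_self_right.symm⟩
      · exact absurd rfl huv
    · exact ⟨(P.disj1 p hp q hq hpq).mono (hcomp hu' hp).1 (hcomp hv' hq).1,
        (P.disj2 p hp q hq hpq).mono (hcomp hu' hp).2 (hcomp hv' hq).2⟩
  have hsplit1 : ∀ p : N × N', (x ⊓ p.1) ⊔ (xᶜ ⊓ p.1) = p.1 := by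
    intro p
    rw [← inf_sup_right, sup_compl_eq_top, top_inf_eq]
  refine ⟨⟨s', fun u hu v hv huv => (hd u hu v hv huv).1,
      fun u hu v hv huv => (hd u hu v hv huv).2, ?_, ?_, ?_⟩, rfl, ?_, ?_⟩
  · -- sup1
    rw [hs', Finset.sup_biUnion, ← P.sup1]
    apply Finset.sup_congr rfl
    intro p hp
    rw [Finset.sup_insert, Finset.sup_singleton]
    exact hsplit1 p
  · -- sup2
    rw [hs', Finset.sup_biUnion, ← P.sup2]
    apply Finset.sup_congr rfl
    intro p hp
    rw [Finset.sup_insert, Finset.sup_singleton]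
    exact sup_sdiff_cancel_right (hg p hp).1
  · -- meas
    intro q hq
    obtain ⟨p, hp, hq' | hq'⟩ := hmem' q hq <;> subst hq'
    · exact (hg p hp).2.symm
    · have hdisj : Disjoint (x ⊓ p.1) (xᶜ ⊓ p.1) :=
        disjoint_compl_right.mono inf_le_left inf_le_left
      have hsplit : μ p.1 = μ (x ⊓ p.1) + μ (xᶜ ⊓ p.1) := by
        rw [← hN.2.2.1 _ _ hdisj, hsplit1 p]
      have h2 : μ' (p.2 \ g p) = μ' p.2 - μ' (g p) := mu_sdiff hN' (hg p hp).1
      show μ (xᶜ ⊓ p.1) = μ' (p.2 \ g p)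
      rw [h2, (hg p hp).2, ← P.meas p hp]
      linarith
  · -- Refines
    exact refines_of_sub hN hN' hle
  · -- mem x
    show x ≤ _
    have hx : x = P.s.sup (fun p => x ⊓ p.1) := by
      rw [← Finset.sup_inf_distrib_left, P.sup1, inf_top_eq]
    conv_lhs => rw [hx]
    apply Finset.sup_le
    intro p hp
    refine Finset.le_sup (f := Prod.fst) (b := (x ⊓ p.1, g p)) (Finset.mem_filter.mpr ⟨?_, inf_le_left⟩)
    show (x ⊓ p.1, g p) ∈ s'
    rw [hs', Finset.mem_biUnion]
    exact ⟨p, hp, Finset.mem_insert_self _ _⟩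

theorem exists_extend (hN : IsGoodRationalMeasureAlgebra N μ)
    (hN' : IsGoodRationalMeasureAlgebra N' μ') (P : PIso N N' μ μ') (x : N) :
    ∃ P' : PIso N N' μ μ', Refines P' P ∧ P'.mem x := by
  have hgood : ∀ p : N × N', ∃ c : N', p ∈ P.s → c ≤ p.2 ∧ μ' c = μ (x ⊓ p.1) := by
    intro p
    by_cases hp : p ∈ P.s
    · obtain ⟨q, hq⟩ := hN.2.2.2.2.2.1 (x ⊓ p.1)
      have h0 : (0:ℝ) ≤ (q:ℝ) := hq ▸ mu_nonneg hN _
      have h1 : (q:ℝ) ≤ μ' p.2 := by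
        rw [← P.meas p hp, ← hq]
        exact mu_mono hN inf_le_right
      obtain ⟨c, hc1, hc2⟩ := hN'.2.2.2.2.2.2.2 p.2 q h0 h1
      exact ⟨c, fun _ => ⟨hc1, hc2.trans hq.symm⟩⟩
    · exact ⟨⊥, fun h => absurd h hp⟩
  choose g hg using hgood
  obtain ⟨P', _, hr, hm⟩ := exists_extend_aux hN hN' P x g (fun p hp => hg p hp)
  exact ⟨P', hr, hm⟩

theorem exists_orderIso [Countable N] [Countable N']
    (hN : IsGoodRationalMeasureAlgebra N μ) (hN' : IsGoodRationalMeasureAlgebra N' μ')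
    (P0 : PIso N N' μ μ') :
    ∃ e : N ≃o N', (∀ a : N, μ' (e a) = μ a) ∧ ∀ a : N, P0.mem a → e a = P0.map a := by
  have : Nonempty N := ⟨⊥⟩
  have : Nonempty N' := ⟨⊥⟩
  obtain ⟨u, hu⟩ := exists_surjective_nat N
  obtain ⟨v, hv⟩ := exists_surjective_nat N'
  have step : ∀ (n : ℕ) (P : PIso N N' μ μ'), ∃ P', Refines P' P ∧
      ((n % 2 = 0 → P'.mem (u (n / 2))) ∧ (n % 2 ≠ 0 → P'.symm.mem (v (n / 2)))) := by
    intro n P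
    by_cases h : n % 2 = 0
    · obtain ⟨P', hr, hm⟩ := exists_extend hN hN' P (u (n / 2))
      exact ⟨P', hr, fun _ => hm, fun h' => absurd h h'⟩
    · obtain ⟨R, hr, hm⟩ := exists_extend hN' hN P.symm (v (n / 2))
      refine ⟨R.symm, ?_, ⟨fun h' => absurd h' h, fun _ => ?_⟩⟩
      · have := Refines.symm hN' hN hr
        rwa [symm_symm] at this
      · rwa [symm_symm]
  choose st hst1 hst2 using step
  set Q : ℕ → PIso N N' μ μ' := fun n => Nat.rec P0 st n with hQdef
  have hchain : ∀ m n, n ≤ m → Refines (Q m) (Q n) := by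
    intro m n h
    induction m, h using Nat.le_induction with
    | base => exact Refines.refl _
    | succ m hm ih => exact Refines.trans (hst1 m (Q m)) ih
  have hchain' : ∀ m n, n ≤ m → Refines (Q m).symm (Q n).symm :=
    fun m n h => Refines.symm hN hN' (hchain m n h)
  have hmem : ∀ x : N, ∃ n, (Q n).mem x := by
    intro x
    obtain ⟨k, rfl⟩ := hu x
    refine ⟨2 * k + 1, ?_⟩
    have h := (hst2 (2 * k) (Q (2 * k))).1 (by omega)
    have h2 : (2 * k) / 2 = k := by omega
    rw [h2] at h
    exact h
  have hmem' : ∀ y : N', ∃ n, (Q n).symm.mem y := by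
    intro y
    obtain ⟨k, rfl⟩ := hv y
    refine ⟨2 * k + 2, ?_⟩
    have h := (hst2 (2 * k + 1) (Q (2 * k + 1))).2 (by omega)
    have h2 : (2 * k + 1) / 2 = k := by omega
    rw [h2] at h
    exact h
  set E : N → N' := fun x => (Q (Nat.find (hmem x))).map x with hEdef
  set E' : N' → N := fun y => (Q (Nat.find (hmem' y))).symm.map y with hE'def
  have hmemUp : ∀ (x : N) (n m : ℕ), n ≤ m → (Q n).mem x → (Q m).mem x :=
    fun x n m h hx => ((hchain m n h) x hx).1
  have hmemUp' : ∀ (y : N') (n m : ℕ), n ≤ m → (Q n).symm.mem y → (Q m).symm.mem y :=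
    fun y n m h hy => ((hchain' m n h) y hy).1
  have hcons : ∀ (x : N) (n : ℕ), (Q n).mem x → (Q n).map x = E x := by
    intro x n hx
    have hfind : Nat.find (hmem x) ≤ n := Nat.find_min' (hmem x) hx
    exact ((hchain n _ hfind) x (Nat.find_spec (hmem x))).2
  have hcons' : ∀ (y : N') (n : ℕ), (Q n).symm.mem y → (Q n).symm.map y = E' y := by
    intro y n hy
    have hfind : Nat.find (hmem' y) ≤ n := Nat.find_min' (hmem' y) hy
    exact ((hchain' n _ hfind) y (Nat.find_spec (hmem' y))).2
  have hE'E : ∀ x, E' (E x) = x := by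
    intro x
    have hx : (Q (Nat.find (hmem x))).mem x := Nat.find_spec (hmem x)
    have h1 : (Q (Nat.find (hmem x))).symm.mem (E x) := mem_map_symm _ hx
    rw [← hcons' (E x) _ h1]
    exact map_symm_map hN hN' _ hx
  have hEE' : ∀ y, E (E' y) = y := by
    intro y
    have hy : (Q (Nat.find (hmem' y))).symm.mem y := Nat.find_spec (hmem' y)
    have h1 : (Q (Nat.find (hmem' y))).mem (E' y) := by
      have := mem_map_symm (Q (Nat.find (hmem' y))).symm hy
      rwa [symm_symm] at this
    rw [← hcons (E' y) _ h1]
    have := map_symm_map hN' hN (Q (Nat.find (hmem' y))).symm hy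
    rwa [symm_symm] at this
  have hmono : ∀ {x y : N}, x ≤ y → E x ≤ E y := by
    intro x y h
    have hx : (Q (max (Nat.find (hmem x)) (Nat.find (hmem y)))).mem x :=
      hmemUp x _ _ (le_max_left _ _) (Nat.find_spec (hmem x))
    have hy : (Q (max (Nat.find (hmem x)) (Nat.find (hmem y)))).mem y :=
      hmemUp y _ _ (le_max_right _ _) (Nat.find_spec (hmem y))
    rw [← hcons x _ hx, ← hcons y _ hy]
    exact map_mono _ h
  have hmono' : ∀ {x y : N'}, x ≤ y → E' x ≤ E' y := by
    intro x y h
    have hx : (Q (max (Nat.find (hmem' x)) (Nat.find (hmem' y)))).symm.mem x :=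
      hmemUp' x _ _ (le_max_left _ _) (Nat.find_spec (hmem' x))
    have hy : (Q (max (Nat.find (hmem' x)) (Nat.find (hmem' y)))).symm.mem y :=
      hmemUp' y _ _ (le_max_right _ _) (Nat.find_spec (hmem' y))
    rw [← hcons' x _ hx, ← hcons' y _ hy]
    exact map_mono _ h
  have hmeasE : ∀ x, μ' (E x) = μ x := fun x => map_measure hN hN' _ (Nat.find_spec (hmem x))
  refine ⟨⟨⟨E, E', hE'E, hEE'⟩, ?_⟩, hmeasE, ?_⟩
  · intro a b
    show E a ≤ E b ↔ a ≤ b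
    constructor
    · intro h
      have := hmono' h
      rwa [hE'E, hE'E] at this
    · exact fun h => hmono h
  · intro a ha
    exact (hcons a 0 ha).symm

section Homog

variable (hN : IsGoodRationalMeasureAlgebra N μ)
    (S : Set N) (hbot : ⊥ ∈ S) (htop : ⊤ ∈ S)
    (hsup : ∀ a ∈ S, ∀ b ∈ S, a ⊔ b ∈ S) (hinf : ∀ a ∈ S, ∀ b ∈ S, a ⊓ b ∈ S)
    (hcompl : ∀ a ∈ S, aᶜ ∈ S) (f : N → N)
    (fsup : ∀ a ∈ S, ∀ b ∈ S, f (a ⊔ b) = f a ⊔ f b)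
    (finf : ∀ a ∈ S, ∀ b ∈ S, f (a ⊓ b) = f a ⊓ f b)
    (fbot : f ⊥ = ⊥) (ftop : f ⊤ = ⊤) (fmeas : ∀ a ∈ S, μ (f a) = μ a)

include hbot hsup fsup fbot in
theorem f_finsetSup (G : Finset (N × N)) (hG : ∀ p ∈ G, p.1 ∈ S) :
    G.sup Prod.fst ∈ S ∧ f (G.sup Prod.fst) = G.sup (fun p => f p.1) := by
  classical
  induction G using Finset.induction_on with
  | empty => simpa using ⟨hbot, fbot⟩
  | @insert p G hp ih =>
      have h1 := ih (fun q hq => hG q (Finset.mem_insert_of_mem hq))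
      have hpS := hG p (Finset.mem_insert_self p G)
      rw [Finset.sup_insert, Finset.sup_insert]
      exact ⟨hsup _ hpS _ h1.1, by rw [fsup _ hpS _ h1.1, h1.2]⟩

include hbot hsup fsup fbot in
theorem map_eq_f (P0 : PIso N N μ μ) (hInv : ∀ p ∈ P0.s, p.1 ∈ S ∧ p.2 = f p.1)
    {a : N} (ha : P0.mem a) : P0.map a = f a := by
  have hFs : ∀ p ∈ P0.s.filter (fun p => p.1 ≤ a), p.1 ∈ S :=
    fun p hp => (hInv p (Finset.mem_of_mem_filter p hp)).1
  have h2 := (f_finsetSup S hbot hsup f fsup fbot _ hFs).2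
  show (P0.s.filter (fun p => p.1 ≤ a)).sup Prod.snd = f a
  conv_rhs => rw [← mem_sup_eq P0 ha]
  rw [h2]
  apply Finset.sup_congr rfl
  intro p hp
  exact (hInv p (Finset.mem_of_mem_filter p hp)).2

include hN hbot htop hsup hinf hcompl fsup finf fbot ftop fmeas in
theorem exists_init (T : Finset N) (hT : ↑T ⊆ S) :
    ∃ P0 : PIso N N μ μ, (∀ p ∈ P0.s, p.1 ∈ S ∧ p.2 = f p.1) ∧ ∀ a ∈ T, P0.mem a := by
  classical
  induction T using Finset.induction_on with
  | empty =>
      refine ⟨⟨{(⊤, ⊤)}, ?_, ?_, ?_, ?_, ?_⟩, ?_, by simp⟩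
      · intro p hp q hq hpq
        rw [Finset.mem_singleton] at hp hq
        subst hp; subst hq; exact absurd rfl hpq
      · intro p hp q hq hpq
        rw [Finset.mem_singleton] at hp hq
        subst hp; subst hq; exact absurd rfl hpq
      · simp
      · simp
      · intro p hp
        rw [Finset.mem_singleton] at hp
        subst hp; rfl
      · intro p hp
        rw [Finset.mem_singleton] at hp
        subst hp
        exact ⟨htop, ftop.symm⟩
  | @insert x T hx ih =>
      have hxS : x ∈ S := hT (Finset.mem_insert_self x T)
      obtain ⟨P, hInv, hmemT⟩ := ih (fun a ha => hT (Finset.mem_insert_of_mem ha))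
      have hg : ∀ p ∈ P.s, f (x ⊓ p.1) ≤ p.2 ∧ μ (f (x ⊓ p.1)) = μ (x ⊓ p.1) := by
        intro p hp
        obtain ⟨hpS, hpf⟩ := hInv p hp
        have hxp : x ⊓ p.1 ∈ S := hinf x hxS p.1 hpS
        constructor
        · rw [finf x hxS p.1 hpS, hpf]
          exact inf_le_right
        · exact fmeas _ hxp
      obtain ⟨P', hs', hr, hm⟩ := exists_extend_aux hN hN P x (fun p => f (x ⊓ p.1)) hg
      refine ⟨P', ?_, ?_⟩
      · intro q hq
        rw [hs', Finset.mem_biUnion] at hq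
        obtain ⟨p, hp, hq⟩ := hq
        obtain ⟨hpS, hpf⟩ := hInv p hp
        rw [Finset.mem_insert, Finset.mem_singleton] at hq
        have hxpS : x ⊓ p.1 ∈ S := hinf x hxS p.1 hpS
        have hxcpS : xᶜ ⊓ p.1 ∈ S := hinf _ (hcompl x hxS) _ hpS
        rcases hq with rfl | rfl
        · exact ⟨hxpS, rfl⟩
        · refine ⟨hxcpS, ?_⟩
          show p.2 \ f (x ⊓ p.1) = f (xᶜ ⊓ p.1)
          have hdisj : Disjoint (f (x ⊓ p.1)) (f (xᶜ ⊓ p.1)) := by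
            rw [disjoint_iff, ← finf _ hxpS _ hxcpS]
            have hb : (x ⊓ p.1) ⊓ (xᶜ ⊓ p.1) = ⊥ :=
              disjoint_iff.mp (disjoint_compl_right.mono inf_le_left inf_le_left)
            rw [hb, fbot]
          have hsupf : f (x ⊓ p.1) ⊔ f (xᶜ ⊓ p.1) = p.2 := by
            rw [← fsup _ hxpS _ hxcpS, ← inf_sup_right, sup_compl_eq_top, top_inf_eq, hpf]
          rw [← hsupf, hdisj.sup_sdiff_cancel_left]
      · intro a ha
        rcases Finset.mem_insert.mp ha with rfl | haT
        · exact hm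
        · exact (hr a (hmemT a haT)).1

end Homog

end PIso

end GMPAux

/-- Uniqueness and ultrahomogeneity of the countable atomless good rational-valued measured
Boolean algebra: any two such algebras are isomorphic by a measure-preserving Boolean
isomorphism, and any measure-preserving isomorphism between finite subalgebras extends to a
measure-preserving automorphism. -/
theorem goodRationalMeasureAlgebra_unique_and_ultrahomogeneous
    {N N' : Type*} [BooleanAlgebra N] [BooleanAlgebra N'] [Countable N] [Countable N']
    (μ : N → ℝ) (μ' : N' → ℝ)
    (hN : IsGoodRationalMeasureAlgebra N μ) (hN' : IsGoodRationalMeasureAlgebra N' μ') :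
    (∃ e : N ≃o N', ∀ a : N, μ' (e a) = μ a) ∧
    (∀ S : Set N, S.Finite → ⊥ ∈ S → ⊤ ∈ S →
      (∀ a ∈ S, ∀ b ∈ S, a ⊔ b ∈ S) → (∀ a ∈ S, ∀ b ∈ S, a ⊓ b ∈ S) → (∀ a ∈ S, aᶜ ∈ S) →
      ∀ f : N → N,
        (∀ a ∈ S, ∀ b ∈ S, f (a ⊔ b) = f a ⊔ f b) →
        (∀ a ∈ S, ∀ b ∈ S, f (a ⊓ b) = f a ⊓ f b) →
        (∀ a ∈ S, f aᶜ = (f a)ᶜ) → f ⊥ = ⊥ → f ⊤ = ⊤ →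
        (∀ a ∈ S, μ (f a) = μ a) →
        ∃ e : N ≃o N, (∀ a : N, μ (e a) = μ a) ∧ ∀ a ∈ S, e a = f a) := by
  classical
  constructor
  · -- uniqueness
    have P0 : GMPAux.PIso N N' μ μ' := by
      refine ⟨{(⊤, ⊤)}, ?_, ?_, ?_, ?_, ?_⟩
      · intro p hp q hq hpq
        rw [Finset.mem_singleton] at hp hq
        subst hp; subst hq; exact absurd rfl hpq
      · intro p hp q hq hpq
        rw [Finset.mem_singleton] at hp hq
        subst hp; subst hq; exact absurd rfl hpq
      · simp
      · simp
      · intro p hp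
        rw [Finset.mem_singleton] at hp
        subst hp
        show μ ⊤ = μ' ⊤
        rw [hN.2.1, hN'.2.1]
    obtain ⟨e, he, -⟩ := GMPAux.PIso.exists_orderIso hN hN' P0
    exact ⟨e, he⟩
  · intro S hS hbot htop hsup hinf hcompl f fsup finf fcompl fbot ftop fmeas
    obtain ⟨P0, hInv, hmemT⟩ := GMPAux.PIso.exists_init hN S hbot htop hsup hinf hcompl f
      fsup finf fbot ftop fmeas hS.toFinset (by simp [Set.Finite.coe_toFinset])
    obtain ⟨e, he, hmap⟩ := GMPAux.PIso.exists_orderIso hN hN P0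
    refine ⟨e, he, ?_⟩
    intro a ha
    have haT : a ∈ hS.toFinset := hS.mem_toFinset.mpr ha
    rw [hmap a (hmemT a haT)]
    exact GMPAux.PIso.map_eq_f S hbot hsup f fsup fbot P0 hInv (hmemT a haT)
end

section
/- Let B be a finite measured Boolean algebra all of whose atoms have rational measure, and let f₁,…,f_k be partial measure-preserving isomorphisms between subalgebras of B. Then there exists a finite measured Boolean algebra B' ⊇ B, all of whose atoms have equal measure, and automorphisms g₁,…,g_k of B' with g_i extending f_i for each i (the Hrushovski extension property for finite rational measure algebras). -/
set_option linter.unusedSectionVars false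
set_option linter.unusedVariables false
set_option maxHeartbeats 1000000

/-- A subset of a Boolean algebra that is a (finite) subalgebra. -/
def IsBoolSubalgebra {B : Type*} [BooleanAlgebra B] (S : Set B) : Prop :=
  ⊥ ∈ S ∧ ⊤ ∈ S ∧ (∀ a ∈ S, ∀ b ∈ S, a ⊔ b ∈ S) ∧ (∀ a ∈ S, ∀ b ∈ S, a ⊓ b ∈ S) ∧
    ∀ a ∈ S, aᶜ ∈ S

section Aux
variable {B : Type*} [BooleanAlgebra B] [Fintype B]

lemma atom_le_sup_iff {c a b : B} (hc : IsAtom c) : c ≤ a ⊔ b ↔ c ≤ a ∨ c ≤ b := by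
  constructor
  · intro h
    by_contra hcon
    push_neg at hcon
    have h1 : c ⊓ a = ⊥ := by
      rcases (hc.le_iff.mp inf_le_left) with h' | h'
      · exact h'
      · exact absurd (h' ▸ inf_le_right) hcon.1
    have h2 : c ⊓ b = ⊥ := by
      rcases (hc.le_iff.mp inf_le_left) with h' | h'
      · exact h'
      · exact absurd (h' ▸ inf_le_right) hcon.2
    have : c = ⊥ := by
      have := inf_sup_left c a b
      rw [inf_eq_left.mpr h, h1, h2, sup_idem] at this
      exact this.symm ▸ h1 ▸ rfl
    exact hc.1 this
  · rintro (h | h)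
    · exact h.trans le_sup_left
    · exact h.trans le_sup_right

lemma atom_le_compl_iff {c a : B} (hc : IsAtom c) : c ≤ aᶜ ↔ ¬ c ≤ a := by
  constructor
  · intro h h'
    exact hc.1 (le_bot_iff.mp (le_inf h' h |>.trans_eq (inf_compl_eq_bot)))
  · intro h
    rcases hc.le_iff.mp (inf_le_left (a := c) (b := a)) with h' | h'
    · exact le_compl_iff_disjoint_right.mpr (disjoint_iff.mpr h')
    · exact absurd (h' ▸ inf_le_right) h

lemma atom_le_finset_sup_iff {c : B} (hc : IsAtom c) {α : Type*} (s : Finset α) (h : α → B) :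
    c ≤ s.sup h ↔ ∃ x ∈ s, c ≤ h x := by
  classical
  induction s using Finset.induction_on with
  | empty => simp [hc.1, le_bot_iff]
  | @insert a s ha ih =>
      rw [Finset.sup_insert, atom_le_sup_iff hc, ih]
      simp

lemma eq_sup_atoms (b : B) (s : Finset B) (hs : ∀ a, a ∈ s ↔ IsAtom a ∧ a ≤ b) :
    b = s.sup id := by
  have hle : s.sup id ≤ b := Finset.sup_le fun a ha => ((hs a).mp ha).2
  refine le_antisymm ?_ hle
  by_contra hcon
  have hne : b ⊓ (s.sup id)ᶜ ≠ ⊥ := by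
    intro h
    apply hcon
    have := inf_sup_left b (s.sup id) (s.sup id)ᶜ
    rw [sup_compl_eq_top, inf_top_eq, h, sup_bot_eq] at this
    exact this.trans_le inf_le_right
  obtain ⟨c, hc, hcle⟩ := (eq_bot_or_exists_atom_le (b ⊓ (s.sup id)ᶜ)).resolve_left hne
  have h1 : c ≤ b := hcle.trans inf_le_left
  have h2 : c ≤ (s.sup id)ᶜ := hcle.trans inf_le_right
  have h3 : c ≤ s.sup id := Finset.le_sup (f := id) ((hs c).mpr ⟨hc, h1⟩)
  exact hc.1 (le_bot_iff.mp ((le_inf h3 h2).trans_eq inf_compl_eq_bot))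

/-- A relative atom of a subalgebra `S`. -/
def IsSubAtom (S : Set B) (c : B) : Prop :=
  c ∈ S ∧ c ≠ ⊥ ∧ ∀ d ∈ S, d ≤ c → d = ⊥ ∨ d = c

lemma sub_sup_mem {S : Set B} (hS : IsBoolSubalgebra S) {α : Type*} (s : Finset α) (h : α → B)
    (hmem : ∀ x ∈ s, h x ∈ S) : s.sup h ∈ S :=
  Finset.sup_induction hS.1 (fun a ha b hb => hS.2.2.1 a ha b hb) hmem

lemma sub_exists_atom {S : Set B} (hS : IsBoolSubalgebra S) {b : B} (hb : b ∈ S) (hb0 : b ≠ ⊥) :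
    ∃ c, IsSubAtom S c ∧ c ≤ b := by
  classical
  have hne : (Finset.univ.filter (fun d => d ∈ S ∧ d ≤ b ∧ d ≠ ⊥)).Nonempty :=
    ⟨b, by simp [hb, hb0]⟩
  obtain ⟨c, hc, hmin⟩ : ∃ c ∈ Finset.univ.filter (fun d => d ∈ S ∧ d ≤ b ∧ d ≠ ⊥),
      ∀ x ∈ Finset.univ.filter (fun d => d ∈ S ∧ d ≤ b ∧ d ≠ ⊥), ¬ x < c := by
    obtain ⟨c, hc⟩ := Finset.exists_minimal hne
    exact ⟨c, hc.1, fun x hx hlt => lt_irrefl c (lt_of_le_of_lt (hc.2 hx hlt.le) hlt)⟩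
  simp only [Finset.mem_filter, Finset.mem_univ, true_and] at hc
  refine ⟨c, ⟨hc.1, hc.2.2, ?_⟩, hc.2.1⟩
  intro d hd hdc
  by_contra hcon
  push_neg at hcon
  have : d < c := lt_of_le_of_ne hdc hcon.2
  exact hmin d (by simp [hd, hdc.trans hc.2.1, hcon.1]) this

lemma sub_eq_sup_subatoms {S : Set B} (hS : IsBoolSubalgebra S) {b : B} (hb : b ∈ S)
    (s : Finset B) (hs : ∀ c, c ∈ s ↔ IsSubAtom S c ∧ c ≤ b) :
    b = s.sup id := by
  have hle : s.sup id ≤ b := Finset.sup_le fun a ha => ((hs a).mp ha).2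
  refine le_antisymm ?_ hle
  have hsupS : s.sup id ∈ S := sub_sup_mem hS s id (fun x hx => ((hs x).mp hx).1.1)
  have htS : b ⊓ (s.sup id)ᶜ ∈ S := hS.2.2.2.1 b hb _ (hS.2.2.2.2 _ hsupS)
  by_contra hcon
  have hne : b ⊓ (s.sup id)ᶜ ≠ ⊥ := by
    intro h
    apply hcon
    have := inf_sup_left b (s.sup id) (s.sup id)ᶜ
    rw [sup_compl_eq_top, inf_top_eq, h, sup_bot_eq] at this
    exact this.trans_le inf_le_right
  obtain ⟨c, hc, hcle⟩ := sub_exists_atom hS htS hne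
  have h1 : c ≤ b := hcle.trans inf_le_left
  have h2 : c ≤ (s.sup id)ᶜ := hcle.trans inf_le_right
  have h3 : c ≤ s.sup id := Finset.le_sup (f := id) ((hs c).mpr ⟨hc, h1⟩)
  exact hc.2.1 (le_bot_iff.mp ((le_inf h3 h2).trans_eq inf_compl_eq_bot))

lemma subatom_inf_eq_bot {S : Set B} (hS : IsBoolSubalgebra S) {c c' : B}
    (hc : IsSubAtom S c) (hc' : IsSubAtom S c') (hne : c ≠ c') : c ⊓ c' = ⊥ := by
  have hmem : c ⊓ c' ∈ S := hS.2.2.2.1 c hc.1 c' hc'.1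
  rcases hc.2.2 _ hmem inf_le_left with h | h
  · exact h
  · rcases hc'.2.2 _ hmem inf_le_right with h' | h'
    · exact h'
    · exact absurd (h ▸ h'.symm ▸ rfl : c = c') hne

variable {S T : Set B} {f : B → B}

lemma f_bot (hS : IsBoolSubalgebra S) (hbij : Set.BijOn f S T)
    (hfinf : ∀ a ∈ S, ∀ b ∈ S, f (a ⊓ b) = f a ⊓ f b)
    (hfcompl : ∀ a ∈ S, f aᶜ = (f a)ᶜ) : f ⊥ = ⊥ := by
  have h1 : f ⊤ = (f ⊥)ᶜ := by rw [← compl_bot]; exact hfcompl ⊥ hS.1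
  have h2 : f ⊥ = f ⊥ ⊓ f ⊤ := by rw [← hfinf ⊥ hS.1 ⊤ hS.2.1, inf_top_eq]
  rw [h1, inf_compl_eq_bot] at h2
  exact h2

lemma f_subatom (hS : IsBoolSubalgebra S) (hbij : Set.BijOn f S T)
    (hfinf : ∀ a ∈ S, ∀ b ∈ S, f (a ⊓ b) = f a ⊓ f b)
    (hfcompl : ∀ a ∈ S, f aᶜ = (f a)ᶜ)
    {c : B} (hc : IsSubAtom S c) : IsSubAtom T (f c) := by
  have hfbot : f ⊥ = ⊥ := f_bot hS hbij hfinf hfcompl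
  refine ⟨hbij.mapsTo hc.1, ?_, ?_⟩
  · intro h
    exact hc.2.1 (hbij.injOn hc.1 hS.1 (h.trans hfbot.symm))
  · intro d hd hdle
    obtain ⟨e, he, rfl⟩ := hbij.surjOn hd
    have h1 : f (e ⊓ c) = f e := by
      rw [hfinf e he c hc.1]
      exact inf_eq_left.mpr hdle
    have h2 : e ⊓ c = e := hbij.injOn (hS.2.2.2.1 e he c hc.1) he h1
    have h3 : e ≤ c := inf_eq_left.mp h2
    rcases hc.2.2 e he h3 with h | h
    · exact Or.inl (by rw [h, hfbot])
    · exact Or.inr (by rw [h])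

lemma f_finset_sup (hS : IsBoolSubalgebra S)
    (hfsup : ∀ a ∈ S, ∀ b ∈ S, f (a ⊔ b) = f a ⊔ f b)
    (hfbot : f ⊥ = ⊥)
    (s : Finset B) (hmem : ∀ x ∈ s, x ∈ S) : f (s.sup id) = s.sup f := by
  classical
  induction s using Finset.induction_on with
  | empty => simpa using hfbot
  | @insert a s ha ih =>
      have h1 : a ∈ S := hmem a (Finset.mem_insert_self a s)
      have h2 : ∀ x ∈ s, x ∈ S := fun x hx => hmem x (Finset.mem_insert_of_mem hx)
      rw [Finset.sup_insert, Finset.sup_insert, id_eq,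
        hfsup a h1 (s.sup id) (sub_sup_mem hS s id h2), ih h2]

end Aux

/-- The Hrushovski extension property for finite rational-valued measure algebras:
any finite tuple of partial measure-preserving isomorphisms `f₁, …, f_k` between
subalgebras of a finite measured Boolean algebra `B` with rational atom measures extends to
a tuple of measure-preserving automorphisms of a larger finite measured Boolean algebra
`B'` all of whose atoms have equal measure `1/m` — concretely, `B'` can be realized as the
powerset algebra `Finset (Fin m)` with the uniform measure, the automorphisms being induced
by permutations of `Fin m`. -/
theorem hrushovski_property_finite_measure_algebras {B : Type*} [BooleanAlgebra B] [Fintype B]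
    (μ : B → ℝ)
    (hbot : μ ⊥ = 0) (htop : μ ⊤ = 1)
    (hadd : ∀ a b : B, Disjoint a b → μ (a ⊔ b) = μ a + μ b)
    (hpos : ∀ a : B, a ≠ ⊥ → 0 < μ a)
    (hrat : ∀ a : B, IsAtom a → ∃ q : ℚ, μ a = (q : ℝ))
    (k : ℕ) (S T : Fin k → Set B) (f : Fin k → B → B)
    (hS : ∀ i, IsBoolSubalgebra (S i)) (hT : ∀ i, IsBoolSubalgebra (T i))
    (hbij : ∀ i, Set.BijOn (f i) (S i) (T i))
    (hfsup : ∀ i, ∀ a ∈ S i, ∀ b ∈ S i, f i (a ⊔ b) = f i a ⊔ f i b)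
    (hfinf : ∀ i, ∀ a ∈ S i, ∀ b ∈ S i, f i (a ⊓ b) = f i a ⊓ f i b)
    (hfcompl : ∀ i, ∀ a ∈ S i, f i aᶜ = (f i a)ᶜ)
    (hfμ : ∀ i, ∀ a ∈ S i, μ (f i a) = μ a) :
    ∃ (m : ℕ), 0 < m ∧ ∃ ι : B → Finset (Fin m),
      Function.Injective ι ∧ ι ⊥ = ∅ ∧ ι ⊤ = Finset.univ ∧
      (∀ a b : B, ι (a ⊔ b) = ι a ∪ ι b) ∧
      (∀ a b : B, ι (a ⊓ b) = ι a ∩ ι b) ∧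
      (∀ a : B, ι aᶜ = (ι a)ᶜ) ∧
      (∀ a : B, μ a = ((ι a).card : ℝ) / (m : ℝ)) ∧
      ∃ σ : Fin k → Equiv.Perm (Fin m),
        ∀ i, ∀ a ∈ S i, Finset.image (σ i) (ι a) = ι (f i a) := by
  classical
  -- Step 1: a common denominator m for the atom measures
  have hden : ∃ m : ℕ, 0 < m ∧ ∀ a : B, IsAtom a → ∃ n : ℕ, 0 < n ∧ μ a = (n : ℝ) / m := by
    set d : B → ℕ := fun a => if h : IsAtom a then (hrat a h).choose.den else 1 with hd
    have dpos : ∀ a, 0 < d a := fun a => by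
      by_cases h' : IsAtom a
      · simp only [hd]; rw [dif_pos h']; exact (hrat a h').choose.pos
      · simp [hd, h']
    have hprodpos : 0 < ∏ a : B, d a := Finset.prod_pos (fun a _ => dpos a)
    refine ⟨∏ a : B, d a, hprodpos, ?_⟩
    · intro a h
      set q : ℚ := (hrat a h).choose with hq
      have hμq : μ a = (q : ℝ) := (hrat a h).choose_spec
      have hdvd : d a ∣ ∏ a : B, d a := Finset.dvd_prod_of_mem d (Finset.mem_univ a)
      have hda : d a = q.den := by simp [hd, dif_pos h, hq]
      obtain ⟨t, ht⟩ := hdvd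
      have hqpos : 0 < q := by
        have := hpos a h.1
        rw [hμq] at this
        exact_mod_cast this
      have htpos : 0 < t := Nat.pos_of_ne_zero (fun h0 => by
        rw [h0, mul_zero] at ht
        exact hprodpos.ne' ht)
      have hnumpos : 0 < q.num := Rat.num_pos.mpr hqpos
      refine ⟨q.num.toNat * t, Nat.mul_pos (by omega) htpos, ?_⟩
      rw [hμq, ht, hda]
      have h4 : ((q.num.toNat : ℕ) : ℝ) = (q.num : ℝ) := by
        rw [← Int.cast_natCast]
        exact congrArg _ (Int.toNat_of_nonneg hnumpos.le)
      have hnum : ((q.num.toNat * t : ℕ) : ℝ) = (q.num : ℝ) * t := by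
        rw [Nat.cast_mul, h4]
      rw [hnum]
      push_cast
      rw [mul_div_mul_right _ _ (by exact_mod_cast htpos.ne' : (t : ℝ) ≠ 0)]
      rw [Rat.cast_def]
  obtain ⟨m, hm, hden⟩ := hden
  have hm' : (m : ℝ) ≠ 0 := Nat.cast_ne_zero.mpr hm.ne'
  -- Step 2: atom multiplicities
  set N : B → ℕ := fun a => if h : IsAtom a then (hden a h).choose else 0 with hN
  have hNpos : ∀ a, IsAtom a → 0 < N a := fun a h => by
    simp only [hN, dif_pos h]; exact (hden a h).choose_spec.1
  have hNμ : ∀ a, IsAtom a → μ a = (N a : ℝ) / m := fun a h => by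
    simp only [hN, dif_pos h]; exact (hden a h).choose_spec.2
  -- Step 3: additivity over finsets of atoms
  have hμsup : ∀ s : Finset B, (∀ a ∈ s, IsAtom a) → μ (s.sup id) = ∑ a ∈ s, μ a := by
    intro s
    induction s using Finset.induction_on with
    | empty => intro _; simpa using hbot
    | @insert a s ha ih =>
        intro hmem
        have hat : IsAtom a := hmem a (Finset.mem_insert_self a s)
        have hats : ∀ x ∈ s, IsAtom x := fun x hx => hmem x (Finset.mem_insert_of_mem hx)
        have hdisj : Disjoint a (s.sup id) := by
          have hnle : ¬ a ≤ s.sup id := by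
            intro hle
            obtain ⟨x, hx, hax⟩ := (atom_le_finset_sup_iff hat s id).mp hle
            rcases (hats x hx).le_iff.mp hax with h | h
            · exact hat.1 h
            · exact ha (h ▸ hx)
          exact le_compl_iff_disjoint_right.mp ((atom_le_compl_iff hat).mpr hnle)
        rw [Finset.sup_insert, id_eq, hadd _ _ hdisj, ih hats, Finset.sum_insert ha]
  -- Step 4: the set of atoms and the total count
  set A : Finset B := Finset.univ.filter (fun a => IsAtom a) with hA
  have hAmem : ∀ a, a ∈ A ↔ IsAtom a := by intro a; simp [hA]
  have htopA : (⊤ : B) = A.sup id := eq_sup_atoms ⊤ A (by intro a; simp [hA])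
  have hsum1 : ∑ a ∈ A, μ a = 1 := by
    rw [← hμsup A (fun a ha => (hAmem a).mp ha), ← htopA, htop]
  have hNm : ∑ a ∈ A, N a = m := by
    have hcast : ((∑ a ∈ A, N a : ℕ) : ℝ) = m := by
      push_cast
      calc ∑ a ∈ A, (N a : ℝ) = ∑ a ∈ A, μ a * m := Finset.sum_congr rfl (fun a ha => by
              rw [hNμ a ((hAmem a).mp ha)]; field_simp)
        _ = (m : ℝ) := by rw [← Finset.sum_mul, hsum1, one_mul]
    exact_mod_cast hcast
  -- Step 5: the index type and embedding ι
  let P : Type _ := Σ a : {x : B // x ∈ A}, Fin (N a.1)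
  have hPcard : Fintype.card P = m := by
    simp only [P, Fintype.card_sigma, Fintype.card_fin]
    rw [Finset.sum_coe_sort A (fun a => N a)]
    exact hNm
  let e : P ≃ Fin m := Fintype.equivFinOfCardEq hPcard
  set ι : B → Finset (Fin m) :=
    fun b => (Finset.univ.filter (fun p : P => (p.1 : B) ≤ b)).image e with hι
  have hatomP : ∀ p : P, IsAtom (p.1 : B) := fun p => (hAmem _).mp p.1.2
  have hιbot : ι ⊥ = ∅ := by
    have h0 : (Finset.univ.filter fun p : P => (p.1 : B) ≤ ⊥) = ∅ := by
      ext p; simp [le_bot_iff, (hatomP p).1]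
    simp only [hι, h0, Finset.image_empty]
  have hιtop : ι ⊤ = Finset.univ := by
    have h0 : (Finset.univ.filter fun p : P => (p.1 : B) ≤ ⊤) = Finset.univ := by
      ext p; simp
    simp only [hι, h0]
    exact Finset.image_univ_equiv e
  have hιsup2 : ∀ a b : B, ι (a ⊔ b) = ι a ∪ ι b := by
    intro a b
    have h0 : (Finset.univ.filter fun p : P => (p.1 : B) ≤ a ⊔ b)
        = (Finset.univ.filter fun p : P => (p.1 : B) ≤ a)
          ∪ (Finset.univ.filter fun p : P => (p.1 : B) ≤ b) := by
      ext p
      simp [atom_le_sup_iff (hatomP p)]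
    simp only [hι, h0, Finset.image_union]
  have hιinf2 : ∀ a b : B, ι (a ⊓ b) = ι a ∩ ι b := by
    intro a b
    have h0 : (Finset.univ.filter fun p : P => (p.1 : B) ≤ a ⊓ b)
        = (Finset.univ.filter fun p : P => (p.1 : B) ≤ a)
          ∩ (Finset.univ.filter fun p : P => (p.1 : B) ≤ b) := by
      ext p
      simp [le_inf_iff, Finset.mem_inter]
    simp only [hι, h0]
    exact Finset.image_inter _ _ e.injective
  have hιcompl : ∀ a : B, ι aᶜ = (ι a)ᶜ := by
    intro a
    have h0 : (Finset.univ.filter fun p : P => (p.1 : B) ≤ aᶜ)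
        = Finset.univ \ (Finset.univ.filter fun p : P => (p.1 : B) ≤ a) := by
      ext p
      simp [atom_le_compl_iff (hatomP p)]
    simp only [hι, h0]
    rw [Finset.image_sdiff _ _ e.injective, Finset.image_univ_equiv e,
      Finset.compl_eq_univ_sdiff]
  have hιinj : Function.Injective ι := by
    intro b b' h
    have hfil : (Finset.univ.filter fun p : P => (p.1 : B) ≤ b)
        = (Finset.univ.filter fun p : P => (p.1 : B) ≤ b') := by
      apply Finset.image_injective e.injective
      simpa only [hι] using h
    have hiff : ∀ a : B, IsAtom a → (a ≤ b ↔ a ≤ b') := by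
      intro a ha
      have hamem : a ∈ A := (hAmem a).mpr ha
      set p : P := ⟨⟨a, hamem⟩, ⟨0, hNpos a ha⟩⟩ with hp
      constructor
      · intro h'
        have : p ∈ (Finset.univ.filter fun p : P => (p.1 : B) ≤ b) := by
          simp [hp, h']
        rw [hfil] at this
        simpa [hp] using this
      · intro h'
        have : p ∈ (Finset.univ.filter fun p : P => (p.1 : B) ≤ b') := by
          simp [hp, h']
        rw [← hfil] at this
        simpa [hp] using this
    have hb : b = (Finset.univ.filter fun a : B => IsAtom a ∧ a ≤ b).sup id :=
      eq_sup_atoms b _ (by intro a; simp)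
    have hb' : b' = (Finset.univ.filter fun a : B => IsAtom a ∧ a ≤ b').sup id :=
      eq_sup_atoms b' _ (by intro a; simp)
    rw [hb, hb']
    congr 1
    ext a
    simp only [Finset.mem_filter, Finset.mem_univ, true_and]
    exact ⟨fun ⟨h1, h2⟩ => ⟨h1, (hiff a h1).mp h2⟩, fun ⟨h1, h2⟩ => ⟨h1, (hiff a h1).mpr h2⟩⟩
  have hcard : ∀ b : B, (ι b).card = ∑ a ∈ A.filter (fun a => a ≤ b), N a := by
    intro b
    simp only [hι]
    rw [Finset.card_image_of_injective _ e.injective]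
    have hsig : (Finset.univ.filter fun p : P => (p.1 : B) ≤ b)
        = (Finset.univ.filter (fun a : {x : B // x ∈ A} => (a : B) ≤ b)).sigma
            (fun a => Finset.univ) := by
      ext p
      obtain ⟨a, j⟩ := p
      simp only [Finset.mem_filter, Finset.mem_univ, true_and]
      constructor
      · intro h'
        exact Finset.mem_sigma.mpr ⟨Finset.mem_filter.mpr ⟨Finset.mem_univ _, h'⟩,
          Finset.mem_univ _⟩
      · intro h'
        exact (Finset.mem_filter.mp (Finset.mem_sigma.mp h').1).2
    rw [hsig, Finset.card_sigma]
    simp only [Finset.card_univ, Fintype.card_fin]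
    rw [Finset.sum_filter, Finset.sum_coe_sort A (fun a => if a ≤ b then N a else 0),
      ← Finset.sum_filter]
  have hμcard : ∀ b : B, μ b = ((ι b).card : ℝ) / m := by
    intro b
    have h1 : μ b = ∑ a ∈ A.filter (fun a => a ≤ b), μ a := by
      conv_lhs => rw [eq_sup_atoms b (A.filter fun a => a ≤ b) (by intro a; simp [hA])]
      exact hμsup _ (fun a ha => (hAmem a).mp (Finset.mem_of_mem_filter a ha))
    rw [h1, hcard b]
    push_cast
    rw [Finset.sum_div]
    exact Finset.sum_congr rfl (fun a ha =>
      hNμ a ((hAmem a).mp (Finset.mem_of_mem_filter a ha)))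
  have hιfinsup : ∀ (s : Finset B) (h : B → B),
      ι (s.sup h) = s.biUnion (fun c => ι (h c)) := by
    intro s h
    induction s using Finset.induction_on with
    | empty => simpa using hιbot
    | @insert a s ha ih =>
        rw [Finset.sup_insert, hιsup2, Finset.biUnion_insert, ih]
  -- Step 6: the permutations
  have hσ : ∀ i : Fin k, ∃ σ : Equiv.Perm (Fin m),
      ∀ a ∈ S i, Finset.image (⇑σ) (ι a) = ι (f i a) := by
    intro i
    have hfbot : f i ⊥ = ⊥ := f_bot (hS i) (hbij i) (hfinf i) (hfcompl i)
    have hfsub : ∀ c, IsSubAtom (S i) c → IsSubAtom (T i) (f i c) :=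
      fun c hc => f_subatom (hS i) (hbij i) (hfinf i) (hfcompl i) hc
    have hblock : ∀ {U : Set B}, IsBoolSubalgebra U → ∀ c c', IsSubAtom U c →
        IsSubAtom U c' → c ≠ c' → ∀ x, x ∈ ι c → x ∉ ι c' := by
      intro U hU c c' hc hc' hne x hx hx'
      have hmem : x ∈ ι c ∩ ι c' := Finset.mem_inter.mpr ⟨hx, hx'⟩
      rw [← hιinf2, subatom_inf_eq_bot hU hc hc' hne, hιbot] at hmem
      exact absurd hmem (Finset.notMem_empty x)
    have hcover : ∀ x : Fin m, ∃ c, IsSubAtom (S i) c ∧ x ∈ ι c := by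
      intro x
      have h1 : (⊤ : B) = (Finset.univ.filter fun c => IsSubAtom (S i) c).sup id :=
        sub_eq_sup_subatoms (hS i) (hS i).2.1 _ (by intro c; simp)
      have h2 : x ∈ ι ⊤ := by rw [hιtop]; exact Finset.mem_univ x
      rw [h1, hιfinsup _ id] at h2
      obtain ⟨c, hc, hxc⟩ := Finset.mem_biUnion.mp h2
      exact ⟨c, by simpa using hc, hxc⟩
    choose at' hat1 hat2 using hcover
    have huniq : ∀ x c, IsSubAtom (S i) c → x ∈ ι c → at' x = c := by
      intro x c hc hx
      by_contra hne
      exact hblock (hS i) _ _ (hat1 x) hc hne x (hat2 x) hx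
    have hccard : ∀ c ∈ S i, (ι c).card = (ι (f i c)).card := by
      intro c hc
      have hμeq := hfμ i c hc
      rw [hμcard c, hμcard (f i c)] at hμeq
      have h2 : ((ι (f i c)).card : ℝ) = (ι c).card := by
        field_simp at hμeq
        exact_mod_cast hμeq
      exact_mod_cast h2.symm
    set E : B → Fin m → Fin m := fun c x =>
      if h : x ∈ ι c ∧ (ι c).card = (ι (f i c)).card then
        ((Finset.equivOfCardEq h.2) ⟨x, h.1⟩ : Fin m) else x with hE
    have hEmem : ∀ c x (h1 : x ∈ ι c) (h2 : (ι c).card = (ι (f i c)).card),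
        E c x ∈ ι (f i c) := by
      intro c x h1 h2
      simp only [hE]
      rw [dif_pos (And.intro h1 h2)]
      exact ((Finset.equivOfCardEq h2) ⟨x, h1⟩).2
    have hEinj : ∀ c x y, x ∈ ι c → y ∈ ι c → (ι c).card = (ι (f i c)).card →
        E c x = E c y → x = y := by
      intro c x y hx hy h2 hxy
      simp only [hE] at hxy
      rw [dif_pos (And.intro hx h2), dif_pos (And.intro hy h2)] at hxy
      have h3 : ((Finset.equivOfCardEq h2) ⟨x, hx⟩ : {z // z ∈ ι (f i c)})
          = (Finset.equivOfCardEq h2) ⟨y, hy⟩ := Subtype.coe_injective hxy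
      have h4 := (Finset.equivOfCardEq h2).injective h3
      exact congrArg Subtype.val h4
    have hgmemdef : ∀ x : Fin m, E (at' x) x ∈ ι (f i (at' x)) :=
      fun x => hEmem (at' x) x (hat2 x) (hccard _ (hat1 x).1)
    have hginj : Function.Injective (fun x => E (at' x) x) := by
      intro x y hxy
      simp only at hxy
      have hfx := hfsub _ (hat1 x)
      have hfy := hfsub _ (hat1 y)
      have heq : f i (at' x) = f i (at' y) := by
        by_contra hne
        exact hblock (hT i) _ _ hfx hfy hne (E (at' x) x) (hgmemdef x)
          (hxy ▸ hgmemdef y)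
      have heq2 : at' x = at' y := (hbij i).injOn (hat1 x).1 (hat1 y).1 heq
      rw [heq2] at hxy
      exact hEinj (at' y) x y (heq2 ▸ hat2 x) (hat2 y) (hccard _ (hat1 y).1) hxy
    refine ⟨Equiv.ofBijective _ (Finite.injective_iff_bijective.mp hginj), ?_⟩
    have himgat : ∀ c, IsSubAtom (S i) c →
        Finset.image (fun x => E (at' x) x) (ι c) = ι (f i c) := by
      intro c hc
      have hsub : Finset.image (fun x => E (at' x) x) (ι c) ⊆ ι (f i c) := by
        intro y hy
        obtain ⟨x, hx, rfl⟩ := Finset.mem_image.mp hy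
        have h1 := hgmemdef x
        rw [huniq x c hc hx] at h1
        show E (at' x) x ∈ ι (f i c)
        rw [huniq x c hc hx]
        exact h1
      apply Finset.eq_of_subset_of_card_le hsub
      rw [Finset.card_image_of_injective _ hginj]
      exact le_of_eq (hccard c hc.1).symm
    intro a ha
    have hFa : a = (Finset.univ.filter fun c => IsSubAtom (S i) c ∧ c ≤ a).sup id :=
      sub_eq_sup_subatoms (hS i) ha _ (by intro c; simp)
    have hfa : f i a
        = (Finset.univ.filter fun c => IsSubAtom (S i) c ∧ c ≤ a).sup (f i) := by
      conv_lhs => rw [hFa]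
      exact f_finset_sup (hS i) (hfsup i) hfbot _
        (fun x hx => ((Finset.mem_filter.mp hx).2).1.1)
    have hιa : ι a = (Finset.univ.filter fun c => IsSubAtom (S i) c ∧ c ≤ a).biUnion ι := by
      conv_lhs => rw [hFa]
      simpa using hιfinsup _ id
    show Finset.image (fun x => E (at' x) x) (ι a) = ι (f i a)
    rw [hιa, Finset.biUnion_image, hfa, hιfinsup]
    exact Finset.biUnion_congr rfl
      (fun c hc => himgat c (Finset.mem_filter.mp hc).2.1)
  choose σ hσ using hσ
  exact ⟨m, hm, ι, hιinj, hιbot, hιtop, hιsup2, hιinf2, hιcompl, hμcard, σ, hσ⟩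
end

section
/- Let (X,μ) be a standard atomless probability space and let T ∈ Aut(X,μ) be aperiodic (μ{x : T^n x = x} = 0 for all n ≥ 1). Then for every ε > 0 and n ≥ 1 there exists a measurable set E such that E, TE, …, T^{n-1}E are pairwise disjoint and μ(X \ ⋃_{i<n} T^i E) < ε (Rokhlin's lemma), and consequently T lies in the uniform-metric closure of the set of periodic automorphisms: for every ε > 0 there is S ∈ Aut(X,μ) with S^n = id for some n and sup_{A} μ(TA △ SA) < ε. -/
set_option linter.unusedSectionVars false

open MeasureTheory Set symmDiff Function
open scoped ENNReal

section RokhlinAux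

variable {X : Type*} [MeasurableSpace X]

/-- cancellation: `g^[a] (f^[b] x) = f^[b-a] x` when `g` is a left inverse of `f`. -/
lemma iter_cancelA {f g : X → X} (hg : Function.LeftInverse g f) {a b : ℕ} (h : a ≤ b)
    (x : X) : g^[a] (f^[b] x) = f^[b - a] x := by
  conv_lhs => rw [show b = a + (b - a) by omega, Function.iterate_add_apply]
  exact (hg.iterate a) _

lemma iter_cancelB {f g : X → X} (hg : Function.LeftInverse g f) {a b : ℕ} (h : a ≤ b)
    (x : X) : g^[b] (f^[a] x) = g^[b - a] x := by
  conv_lhs => rw [show b = (b - a) + a by omega, Function.iterate_add_apply]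
  rw [hg.iterate a]

variable [StandardBorelSpace X] (μ : Measure X) [IsProbabilityMeasure μ]
variable (T : X ≃ᵐ X)

/-- `B` meets its first `N-1` forward iterates in no point. -/
def RSep (N : ℕ) (B : Set X) : Prop :=
  ∀ j, 1 ≤ j → j < N → ∀ x ∈ B, (⇑T)^[j] x ∉ B

lemma RSep.empty (N : ℕ) : RSep T N (∅ : Set X) := by
  intro j _ _ x hx; exact absurd hx (notMem_empty x)

/-- In any set of positive measure there is a positive-measure `N`-separated subset. -/
lemma exists_sep (haper : ∀ n : ℕ, 1 ≤ n → μ {x | (⇑T)^[n] x = x} = 0)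
    (N : ℕ) (Y : Set X) (hY : MeasurableSet Y) (hY0 : μ Y ≠ 0) :
    ∃ D : Set X, MeasurableSet D ∧ D ⊆ Y ∧ μ D ≠ 0 ∧ RSep T N D := by
  classical
  obtain ⟨S, hSc, hSm, hSsep⟩ :=
    HasCountableSeparatingOn.exists_countable_separating (α := X) (p := MeasurableSet)
      (t := univ)
  have hSc' : (insert (∅ : Set X) S).Countable := hSc.insert _
  obtain ⟨f, hf⟩ := Set.countable_iff_exists_subset_range.mp hSc'
  -- family closed under complements, all measurable
  set fam : ℕ × Bool → Set X := fun p =>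
    if MeasurableSet (f p.1) then (bif p.2 then f p.1 else (f p.1)ᶜ) else ∅ with hfam
  have hfamm : ∀ p, MeasurableSet (fam p) := by
    intro p
    by_cases h : MeasurableSet (f p.1)
    · cases p.2 <;> simp [hfam, h]
    · simp [hfam, h]
  have hkey : ∀ x y : X, x ≠ y → ∃ p, x ∈ fam p ∧ y ∉ fam p := by
    intro x y hxy
    by_contra hcon
    push_neg at hcon
    apply hxy
    refine hSsep x (mem_univ x) y (mem_univ y) ?_
    intro s hs
    have hsm : MeasurableSet s := hSm s hs
    obtain ⟨m, hm⟩ := hf (Set.mem_insert_of_mem _ hs)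
    rw [← hm] at hsm ⊢
    constructor
    · intro hxs
      by_contra hys
      have h1 : x ∈ fam (m, true) := by simp [hfam, hsm, hxs]
      have := hcon (m, true) h1
      simp [hfam, hsm] at this
      exact hys this
    · intro hys
      by_contra hxs
      have h1 : x ∈ fam (m, false) := by simp [hfam, hsm, hxs]
      have := hcon (m, false) h1
      simp [hfam, hsm] at this
      exact this hys
  -- candidate sets
  set D : (Fin (N - 1) → ℕ × Bool) → Set X := fun t =>
    Y ∩ ⋂ i : Fin (N - 1), (fam (t i) \ ((⇑T)^[(i : ℕ) + 1] ⁻¹' fam (t i))) with hD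
  have hDm : ∀ t, MeasurableSet (D t) := by
    intro t
    refine hY.inter (MeasurableSet.iInter fun i => (hfamm (t i)).diff ?_)
    exact (T.measurable.iterate _) (hfamm (t i))
  have hDsep : ∀ t, RSep T N (D t) := by
    intro t j hj1 hjN x hx hTx
    have hiN : j - 1 < N - 1 := by omega
    set i : Fin (N - 1) := ⟨j - 1, hiN⟩ with hi
    have h1 := hx.2
    rw [mem_iInter] at h1
    have h2 := hTx.2
    rw [mem_iInter] at h2
    have hxi := h1 i
    have hTxi := h2 i
    have hji : (i : ℕ) + 1 = j := by
      have : (i : ℕ) = j - 1 := rfl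
      omega
    rw [hji] at hxi
    exact hxi.2 hTxi.1
  -- the good (aperiodic) set covers `Y` up to null
  set G : Set X := ⋃ j ∈ Finset.Ico 1 N, {x : X | (⇑T)^[j] x = x} with hG
  have hGnull : μ G = 0 := by
    refine measure_biUnion_null_iff (Finset.Ico 1 N).countable_toSet |>.2 ?_
    intro j hj
    simp only [Finset.coe_Ico, mem_Ico] at hj
    exact haper j hj.1
  have hcover : Y \ G ⊆ ⋃ t, D t := by
    intro x hx
    have hxG : ∀ j, 1 ≤ j → j < N → (⇑T)^[j] x ≠ x := by
      intro j h1 h2 heq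
      exact hx.2 (mem_biUnion (Finset.mem_Ico.mpr (by omega)) heq)
    have hchoice : ∀ i : Fin (N - 1), ∃ p, x ∈ fam p ∧ (⇑T)^[(i : ℕ) + 1] x ∉ fam p := by
      intro i
      have : (⇑T)^[(i : ℕ) + 1] x ≠ x := by
        have := hxG ((i : ℕ) + 1) (by omega) (by omega)
        exact this
      exact hkey x _ (Ne.symm this)
    choose t ht1 ht2 using hchoice
    refine mem_iUnion.2 ⟨t, hx.1, mem_iInter.2 fun i => ⟨ht1 i, ht2 i⟩⟩
  have hpos : μ (⋃ t, D t) ≠ 0 := by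
    intro h0
    have : μ (Y \ G) = 0 := measure_mono_null hcover h0
    have : μ Y = 0 := by
      refine le_antisymm ?_ zero_le
      have hYsub : Y ⊆ (Y \ G) ∪ G := by intro x hx; by_cases h : x ∈ G <;> simp [h, hx]
      calc μ Y ≤ μ ((Y \ G) ∪ G) := measure_mono hYsub
        _ ≤ μ (Y \ G) + μ G := measure_union_le _ _
        _ = 0 := by rw [this, hGnull]; simp
    exact hY0 this
  obtain ⟨t, ht⟩ : ∃ t, μ (D t) ≠ 0 := by
    by_contra hcon
    push_neg at hcon
    exact hpos (measure_iUnion_null_iff.2 hcon)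
  exact ⟨D t, hDm t, fun x hx => hx.1, ht, hDsep t⟩

/-- all points whose (two-sided) orbit meets `B`. -/
def RSweep (B : Set X) : Set X :=
  (⋃ i : ℕ, (⇑T)^[i] ⁻¹' B) ∪ (⋃ i : ℕ, (⇑T.symm)^[i] ⁻¹' B)

lemma rsweep_meas {B : Set X} (hB : MeasurableSet B) : MeasurableSet (RSweep T B) :=
  ((MeasurableSet.iUnion fun i => (T.measurable.iterate i) hB).union
    (MeasurableSet.iUnion fun i => (T.symm.measurable.iterate i) hB))

lemma subset_rsweep (B : Set X) : B ⊆ RSweep T B := fun x hx =>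
  Or.inl (mem_iUnion.2 ⟨0, hx⟩)

lemma rsweep_mono {B C : Set X} (h : B ⊆ C) : RSweep T B ⊆ RSweep T C := by
  intro x hx
  rcases hx with hx | hx <;> rw [mem_iUnion] at hx <;> rcases hx with ⟨i, hi⟩
  · exact Or.inl (mem_iUnion.2 ⟨i, h hi⟩)
  · exact Or.inr (mem_iUnion.2 ⟨i, h hi⟩)

lemma mem_rsweep_T {B : Set X} {x : X} : T x ∈ RSweep T B ↔ x ∈ RSweep T B := by
  constructor
  · rintro (h | h) <;> rw [mem_iUnion] at h <;> rcases h with ⟨i, hi⟩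
    · exact Or.inl (mem_iUnion.2 ⟨i + 1, by
        rwa [mem_preimage, Function.iterate_succ_apply]⟩)
    · rcases Nat.eq_zero_or_pos i with rfl | hpos
      · exact Or.inl (mem_iUnion.2 ⟨1, by simpa using hi⟩)
      · refine Or.inr (mem_iUnion.2 ⟨i - 1, ?_⟩)
        rw [mem_preimage] at hi ⊢
        have : (⇑T.symm)^[i] (T x) = (⇑T.symm)^[i-1] ((⇑T.symm)^[1] (T x)) := by
          rw [← Function.iterate_add_apply]
          congr 1
          omega
        rw [this] at hi
        simpa using hi
  · rintro (h | h) <;> rw [mem_iUnion] at h <;> rcases h with ⟨i, hi⟩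
    · rcases Nat.eq_zero_or_pos i with rfl | hpos
      · exact Or.inr (mem_iUnion.2 ⟨1, by simpa using hi⟩)
      · refine Or.inl (mem_iUnion.2 ⟨i - 1, ?_⟩)
        rw [mem_preimage] at hi ⊢
        have : (⇑T)^[i-1] (T x) = (⇑T)^[i] x := by
          rw [← Function.iterate_succ_apply]
          congr 1
          omega
        rwa [this]
    · refine Or.inr (mem_iUnion.2 ⟨i + 1, ?_⟩)
      rw [mem_preimage] at hi ⊢
      rw [Function.iterate_succ_apply]
      simpa using hi

lemma mem_rsweep_iterate {B : Set X} {x : X} (j : ℕ) (h : x ∈ RSweep T B) :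
    (⇑T)^[j] x ∈ RSweep T B := by
  induction j with
  | zero => exact h
  | succ k ih => rw [Function.iterate_succ_apply']; exact (mem_rsweep_T T).2 ih

/-- union of two separated sets, the second avoiding the sweep of the first -/
lemma RSep.union {N : ℕ} {B C : Set X} (hB : RSep T N B) (hC : RSep T N C)
    (hCs : C ⊆ (RSweep T B)ᶜ) : RSep T N (B ∪ C) := by
  intro j h1 h2 x hx hTx
  rcases hx with hx | hx
  · rcases hTx with hTx | hTx
    · exact hB j h1 h2 x hx hTx
    · exact hCs hTx (mem_rsweep_iterate T j (subset_rsweep T B hx))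
  · rcases hTx with hTx | hTx
    · exact (hCs hx) (Or.inl (mem_iUnion.2 ⟨j, hTx⟩))
    · exact hC j h1 h2 x hx hTx

/-- The marker lemma: an `N`-separated set whose two-sided sweep is conull. -/
lemma exists_marker (haper : ∀ n : ℕ, 1 ≤ n → μ {x | (⇑T)^[n] x = x} = 0) (N : ℕ) :
    ∃ B : Set X, MeasurableSet B ∧ RSep T N B ∧ μ (RSweep T B)ᶜ = 0 := by
  classical
  have pick : ∀ B : Set X, MeasurableSet B → ∃ C : Set X, MeasurableSet C ∧
      C ⊆ (RSweep T B)ᶜ ∧ RSep T N C ∧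
      ∀ D : Set X, MeasurableSet D → D ⊆ (RSweep T B)ᶜ → RSep T N D → μ D ≤ 2 * μ C := by
    intro B hB
    set M : Set ℝ≥0∞ := {m | ∃ D : Set X, MeasurableSet D ∧ D ⊆ (RSweep T B)ᶜ ∧
      RSep T N D ∧ μ D = m} with hM
    set s := sSup M with hs
    by_cases hs0 : s = 0
    · refine ⟨∅, .empty, empty_subset _, RSep.empty T N, ?_⟩
      intro D hDm hDs hDsep
      have hDle : μ D ≤ s := le_sSup ⟨D, hDm, hDs, hDsep, rfl⟩
      rw [hs0] at hDle
      simp only [le_zero_iff] at hDle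
      simp [hDle]
    · have hstop : s ≠ ⊤ := by
        have h1 : s ≤ 1 := sSup_le (by rintro m ⟨D, -, -, -, rfl⟩; exact prob_le_one)
        exact (h1.trans_lt (by norm_num)).ne
      have hlt : s / 2 < s := ENNReal.half_lt_self hs0 hstop
      obtain ⟨m, ⟨D₀, hD₀m, hD₀s, hD₀sep, rfl⟩, hm⟩ := lt_sSup_iff.mp hlt
      refine ⟨D₀, hD₀m, hD₀s, hD₀sep, ?_⟩
      intro D hDm hDs hDsep
      calc μ D ≤ s := le_sSup ⟨D, hDm, hDs, hDsep, rfl⟩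
        _ = s / 2 * 2 := (ENNReal.div_mul_cancel (by norm_num) (by norm_num)).symm
        _ ≤ μ D₀ * 2 := mul_le_mul_left hm.le 2
        _ = 2 * μ D₀ := mul_comm _ _
  choose pickC hCm hCsub hCsep hCmax using pick
  let next : {B : Set X // MeasurableSet B ∧ RSep T N B} →
      {B : Set X // MeasurableSet B ∧ RSep T N B} :=
    fun p => ⟨p.1 ∪ pickC p.1 p.2.1,
      p.2.1.union (hCm p.1 p.2.1),
      RSep.union T p.2.2 (hCsep p.1 p.2.1) (hCsub p.1 p.2.1)⟩
  let seq : ℕ → {B : Set X // MeasurableSet B ∧ RSep T N B} :=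
    fun k => Nat.rec ⟨∅, MeasurableSet.empty, RSep.empty T N⟩ (fun _ p => next p) k
  have hseq_succ : ∀ k, seq (k+1) = next (seq k) := fun k => rfl
  set Ck : ℕ → Set X := fun k => pickC (seq k).1 (seq k).2.1 with hCkdef
  have hCk_sub_succ : ∀ k, Ck k ⊆ (seq (k+1)).1 := by
    intro k x hx
    rw [hseq_succ]
    exact Or.inr hx
  have hmono : ∀ k l, k ≤ l → (seq k).1 ⊆ (seq l).1 := by
    intro k l hkl
    induction l with
    | zero =>
      have hk0 : k = 0 := by omega
      subst hk0; exact subset_rfl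
    | succ m ih =>
      rcases Nat.lt_or_ge k (m+1) with h | h
      · refine (ih (by omega)).trans ?_
        rw [hseq_succ]
        exact subset_union_left
      · have hk : k = m + 1 := by omega
        subst hk; exact subset_rfl
  refine ⟨⋃ k, (seq k).1, MeasurableSet.iUnion fun k => (seq k).2.1, ?_, ?_⟩
  · intro j h1 h2 x hx hTx
    rw [mem_iUnion] at hx hTx
    rcases hx with ⟨k, hk⟩; rcases hTx with ⟨l, hl⟩
    exact (seq (max k l)).2.2 j h1 h2 x (hmono k _ (le_max_left _ _) hk)
      (hmono l _ (le_max_right _ _) hl)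
  · set B : Set X := ⋃ k, (seq k).1 with hB
    by_contra hW
    obtain ⟨D, hDm, hDsub, hD0, hDsep⟩ := exists_sep μ T haper N (RSweep T B)ᶜ
      (rsweep_meas T (MeasurableSet.iUnion fun k => (seq k).2.1)).compl hW
    have hDk : ∀ k, μ D ≤ 2 * μ (Ck k) := by
      intro k
      refine hCmax _ _ D hDm ?_ hDsep
      intro x hx hsw
      have hsub : (seq k).1 ⊆ B := fun y hy => mem_iUnion.2 ⟨k, hy⟩
      exact (hDsub hx) (rsweep_mono T hsub hsw)
    have hCkd : Pairwise (Function.onFun Disjoint fun k => Ck k) := by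
      have key : ∀ k l, k < l → Disjoint (Ck k) (Ck l) := by
        intro k l hkl
        refine Set.disjoint_left.mpr fun x hxk hxl => ?_
        have h2 : x ∈ (seq l).1 := hmono (k+1) l (by omega) (hCk_sub_succ k hxk)
        exact (hCsub (seq l).1 (seq l).2.1 hxl) (subset_rsweep T _ h2)
      intro k l hkl
      rcases lt_or_gt_of_ne hkl with h | h
      · exact key k l h
      · exact (key l k h).symm
    have hsum : ∑' k, μ (Ck k) ≤ 1 := by
      rw [← measure_iUnion hCkd (fun k => hCm _ _)]
      exact prob_le_one
    have hlow : ∀ k, μ D / 2 ≤ μ (Ck k) := fun k =>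
      ENNReal.div_le_of_le_mul' (hDk k)
    have htop : (⊤ : ℝ≥0∞) ≤ 1 := by
      have hne : μ D / 2 ≠ 0 := by
        simp only [ne_eq, ENNReal.div_eq_zero_iff]
        push_neg
        exact ⟨hD0, by norm_num⟩
      calc (⊤ : ℝ≥0∞) = ∑' _ : ℕ, μ D / 2 :=
            (ENNReal.tsum_const_eq_top_of_ne_zero hne).symm
        _ ≤ ∑' k, μ (Ck k) := ENNReal.tsum_le_tsum hlow
        _ ≤ 1 := hsum
    exact absurd htop (by norm_num)


/-- Rokhlin's lemma. -/
lemma rokhlin_tower (hT : MeasurePreserving T μ μ)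
    (haper : ∀ n : ℕ, 1 ≤ n → μ {x | (⇑T)^[n] x = x} = 0)
    {ε : ℝ} (hε : 0 < ε) {n : ℕ} (hn : 1 ≤ n) :
    ∃ E : Set X, MeasurableSet E ∧
      (∀ i j : ℕ, i < n → j < n → i ≠ j → Disjoint ((⇑T)^[i] '' E) ((⇑T)^[j] '' E)) ∧
      μ ((⋃ i ∈ Finset.range n, (⇑T)^[i] '' E)ᶜ) < ENNReal.ofReal ε := by
  classical
  set N : ℕ := ⌈(n : ℝ) / ε⌉₊ + 1 with hN
  obtain ⟨B, hBm, hBsep, hBsw⟩ := exists_marker μ T haper N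
  set F : X → X := ⇑T with hF
  set Fi : X → X := ⇑T.symm with hFi
  have hinv : Function.LeftInverse Fi F := T.symm_apply_apply
  have hinv' : Function.LeftInverse F Fi := T.apply_symm_apply
  have hTs : MeasurePreserving Fi μ μ := hT.symm T
  -- the level sets
  set Lev : ℕ → Set X := fun j =>
    (Fi^[j] ⁻¹' B) ∩ ⋂ i ∈ Finset.range j, (Fi^[i] ⁻¹' B)ᶜ with hLev
  have hLevm : ∀ j, MeasurableSet (Lev j) :=
    fun j => ((T.symm.measurable.iterate j) hBm).inter
      (MeasurableSet.biInter (Finset.range j).countable_toSet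
        fun i _ => ((T.symm.measurable.iterate i) hBm).compl)
  have hLev_mem : ∀ j x, x ∈ Lev j ↔ (Fi^[j] x ∈ B ∧ ∀ i < j, Fi^[i] x ∉ B) := by
    intro j x
    simp [hLev, Finset.mem_range]
  have hLev_unique : ∀ j j' x, x ∈ Lev j → x ∈ Lev j' → j = j' := by
    intro j j' x hj hj'
    rcases lt_trichotomy j j' with h | h | h
    · exact absurd ((hLev_mem j x).1 hj).1 (((hLev_mem j' x).1 hj').2 j h)
    · exact h
    · exact absurd ((hLev_mem j' x).1 hj').1 (((hLev_mem j x).1 hj).2 j' h)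
  -- the good set: two-sided infinitely recurrent points
  set G : Set X :=
    (⋂ m : ℕ, ⋃ k : ℕ, ⋃ _ : m ≤ k, F^[k] ⁻¹' B) ∩
    (⋂ m : ℕ, ⋃ k : ℕ, ⋃ _ : m ≤ k, Fi^[k] ⁻¹' B) with hG
  have hGm : MeasurableSet G := by
    refine MeasurableSet.inter ?_ ?_
    · exact MeasurableSet.iInter fun m => MeasurableSet.iUnion fun k =>
        MeasurableSet.iUnion fun _ => (T.measurable.iterate k) hBm
    · exact MeasurableSet.iInter fun m => MeasurableSet.iUnion fun k =>
        MeasurableSet.iUnion fun _ => (T.symm.measurable.iterate k) hBm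
  have hG_mem : ∀ x, x ∈ G ↔
      ((∀ m, ∃ k, m ≤ k ∧ F^[k] x ∈ B) ∧ (∀ m, ∃ k, m ≤ k ∧ Fi^[k] x ∈ B)) := by
    intro x
    simp [hG, mem_iInter, mem_iUnion]
  -- invariance of G
  have hGF : ∀ x, x ∈ G ↔ F x ∈ G := by
    intro x
    rw [hG_mem, hG_mem]
    constructor
    · rintro ⟨h1, h2⟩
      constructor
      · intro m
        obtain ⟨k, hk1, hk2⟩ := h1 (m + 1)
        refine ⟨k - 1, by omega, ?_⟩
        have he : F^[k-1] (F x) = F^[k] x := by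
          rw [← Function.iterate_succ_apply]
          congr 1
          omega
        rwa [he]
      · intro m
        obtain ⟨k, hk1, hk2⟩ := h2 m
        refine ⟨k + 1, by omega, ?_⟩
        rw [Function.iterate_succ_apply, show Fi (F x) = x from hinv x]
        exact hk2
    · rintro ⟨h1, h2⟩
      constructor
      · intro m
        obtain ⟨k, hk1, hk2⟩ := h1 m
        refine ⟨k + 1, by omega, ?_⟩
        rwa [Function.iterate_succ_apply]
      · intro m
        obtain ⟨k, hk1, hk2⟩ := h2 (m + 1)
        refine ⟨k - 1, by omega, ?_⟩
        have he : Fi^[k] (F x) = Fi^[k-1] x := by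
          have h3 := iter_cancelB hinv (a := 1) (b := k) (by omega) x
          simpa using h3
        rwa [he] at hk2
  have hGFi : ∀ x, x ∈ G ↔ Fi x ∈ G := by
    intro x
    have h := hGF (Fi x)
    rw [show F (Fi x) = x from hinv' x] at h
    exact h.symm
  have hGiterF : ∀ (i : ℕ) (x : X), x ∈ G ↔ F^[i] x ∈ G := by
    intro i
    induction i with
    | zero => intro x; rfl
    | succ k ih =>
      intro x
      rw [Function.iterate_succ_apply']
      exact (ih x).trans (hGF _)
  have hGiterFi : ∀ (i : ℕ) (x : X), x ∈ G ↔ Fi^[i] x ∈ G := by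
    intro i
    induction i with
    | zero => intro x; rfl
    | succ k ih =>
      intro x
      rw [Function.iterate_succ_apply']
      exact (ih x).trans (hGFi _)
  -- G is conull
  have hGnull : μ Gᶜ = 0 := by
    have hcons : ∀ᵐ x ∂μ, x ∈ B → ∃ᶠ k in Filter.atTop, F^[k] x ∈ B :=
      hT.conservative.ae_mem_imp_frequently_image_mem hBm.nullMeasurableSet
    have hcons' : ∀ᵐ x ∂μ, x ∈ B → ∃ᶠ k in Filter.atTop, Fi^[k] x ∈ B :=
      hTs.conservative.ae_mem_imp_frequently_image_mem hBm.nullMeasurableSet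
    have hae := hcons.and hcons'
    rw [Filter.eventually_iff, mem_ae_iff] at hae
    have hBG : μ (B \ G) = 0 := by
      refine measure_mono_null (fun x hx => ?_) hae
      intro hgood
      simp only [mem_setOf_eq] at hgood
      apply hx.2
      rw [hG_mem]
      exact ⟨fun m => Filter.frequently_atTop.mp (hgood.1 hx.1) m,
             fun m => Filter.frequently_atTop.mp (hgood.2 hx.1) m⟩
    have himg : ∀ i : ℕ, μ (F^[i] ⁻¹' (B \ G)) = 0 := fun i => by
      rw [(hT.iterate i).measure_preimage (hBm.diff hGm).nullMeasurableSet]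
      exact hBG
    have himg' : ∀ i : ℕ, μ (Fi^[i] ⁻¹' (B \ G)) = 0 := fun i => by
      rw [(hTs.iterate i).measure_preimage (hBm.diff hGm).nullMeasurableSet]
      exact hBG
    have hsub : Gᶜ ⊆ (RSweep T B)ᶜ ∪
        ((⋃ i : ℕ, F^[i] ⁻¹' (B \ G)) ∪ (⋃ i : ℕ, Fi^[i] ⁻¹' (B \ G))) := by
      intro x hx
      by_cases hsw : x ∈ RSweep T B
      · right
        rcases hsw with h | h <;> rw [mem_iUnion] at h <;> rcases h with ⟨i, hi⟩
        · exact Or.inl (mem_iUnion.2 ⟨i, hi, fun hGi => hx ((hGiterF i x).2 hGi)⟩)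
        · exact Or.inr (mem_iUnion.2 ⟨i, hi, fun hGi => hx ((hGiterFi i x).2 hGi)⟩)
      · exact Or.inl hsw
    refine measure_mono_null hsub ?_
    rw [measure_union_null_iff]
    refine ⟨hBsw, ?_⟩
    rw [measure_union_null_iff]
    exact ⟨measure_iUnion_null himg, measure_iUnion_null himg'⟩
  -- the base of the tower
  set E : Set X := (G ∩ ⋃ q : ℕ, Lev (n * q)) ∩
      ⋂ k ∈ Finset.Ico 1 n, (F^[k] ⁻¹' B)ᶜ with hE
  have hEm : MeasurableSet E := by
    refine (hGm.inter (MeasurableSet.iUnion fun q => hLevm (n*q))).inter ?_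
    exact MeasurableSet.biInter (Finset.Ico 1 n).countable_toSet
      fun k _ => ((T.measurable.iterate k) hBm).compl
  have hE_mem : ∀ x, x ∈ E ↔
      ((x ∈ G ∧ ∃ q, x ∈ Lev (n * q)) ∧ ∀ k, 1 ≤ k → k < n → F^[k] x ∉ B) := by
    intro x
    simp [hE, Finset.mem_Ico, and_imp]
  -- shifting the base up the tower
  have hshift : ∀ (j i : ℕ) (x : X), x ∈ Lev j →
      (∀ k, 1 ≤ k → k ≤ i → F^[k] x ∉ B) → F^[i] x ∈ Lev (j + i) := by
    intro j i x hx hk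
    rw [hLev_mem] at hx ⊢
    obtain ⟨hxj, hxlt⟩ := hx
    constructor
    · have h1 : Fi^[j + i] (F^[i] x) = Fi^[j] x := by
        rw [iter_cancelB hinv (by omega : i ≤ j + i)]
        congr 1
        omega
      rwa [h1]
    · intro m hm
      rcases le_or_gt m i with h | h
      · rw [iter_cancelA hinv h]
        rcases Nat.eq_zero_or_pos (i - m) with h0 | hpos
        · rw [h0]
          simpa using hxlt 0 (by omega)
        · exact hk (i - m) (by omega) (by omega)
      · rw [iter_cancelB hinv h.le]
        exact hxlt (m - i) (by omega)
  -- exact disjointness of the tower levels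
  have hdisj : ∀ i j : ℕ, i < n → j < n → i ≠ j →
      Disjoint (F^[i] '' E) (F^[j] '' E) := by
    intro i j hi hj hij
    rw [Set.disjoint_left]
    rintro a ⟨x, hxE, rfl⟩ ⟨y, hyE, hyx⟩
    rw [hE_mem] at hxE hyE
    obtain ⟨⟨hxG, q1, hq1⟩, hxB⟩ := hxE
    obtain ⟨⟨hyG, q2, hq2⟩, hyB⟩ := hyE
    have h1 : F^[i] x ∈ Lev (n * q1 + i) :=
      hshift _ _ _ hq1 (fun k hk1 hk2 => hxB k hk1 (by omega))
    have h2 : F^[j] y ∈ Lev (n * q2 + j) :=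
      hshift _ _ _ hq2 (fun k hk1 hk2 => hyB k hk1 (by omega))
    rw [hyx] at h2
    have heq := hLev_unique _ _ _ h1 h2
    have hijeq : i = j := by
      have hmod : (n * q1 + i) % n = (n * q2 + j) % n := by rw [heq]
      rwa [Nat.mul_add_mod, Nat.mul_add_mod, Nat.mod_eq_of_lt hi,
        Nat.mod_eq_of_lt hj] at hmod
    exact hij hijeq
  -- coverage
  have hcover : ∀ x, x ∈ G → (∀ k, 1 ≤ k → k < n → F^[k] x ∉ B) →
      x ∈ ⋃ i ∈ Finset.range n, F^[i] '' E := by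
    intro x hxG hxB
    have hex : ∃ j : ℕ, Fi^[j] x ∈ B := by
      obtain ⟨k, _, hk⟩ := ((hG_mem x).1 hxG).2 0
      exact ⟨k, hk⟩
    set b := Nat.find hex with hb
    have hbB : Fi^[b] x ∈ B := Nat.find_spec hex
    have hbmin : ∀ i < b, Fi^[i] x ∉ B := fun i hi => Nat.find_min hex hi
    set s := b % n with hs
    set q := b / n with hq
    have hsn : s < n := Nat.mod_lt _ (by omega)
    have hsb : s ≤ b := Nat.mod_le b n
    have hbqs : n * q + s = b := Nat.div_add_mod b n
    set y := Fi^[s] x with hy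
    have hyx : F^[s] y = x := (hinv'.iterate s) x
    refine mem_biUnion (Finset.mem_range.mpr hsn) ⟨y, ?_, hyx⟩
    rw [hE_mem]
    refine ⟨⟨(hGiterFi s x).1 hxG, q, ?_⟩, ?_⟩
    · rw [hLev_mem]
      constructor
      · have he : Fi^[n*q] y = Fi^[b] x := by
          rw [hy, ← Function.iterate_add_apply, hbqs]
        rw [he]
        exact hbB
      · intro m hm
        have he : Fi^[m] y = Fi^[m + s] x := by
          rw [hy, ← Function.iterate_add_apply]
        rw [he]
        exact hbmin (m + s) (by omega)
    · intro k hk1 hkn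
      rcases le_or_gt k s with h | h
      · have he : F^[k] y = Fi^[s - k] x := by
          rw [hy, iter_cancelA hinv' h]
        rw [he]
        exact hbmin (s - k) (by omega)
      · have he : F^[k] y = F^[k - s] x := by
          rw [hy, iter_cancelB hinv' h.le]
        rw [he]
        exact hxB (k - s) (by omega) (by omega)
  have hcovc : (⋃ i ∈ Finset.range n, F^[i] '' E)ᶜ ⊆
      Gᶜ ∪ ⋃ k ∈ Finset.Ico 1 n, F^[k] ⁻¹' B := by
    intro x hx
    by_cases hxG : x ∈ G
    · by_cases hxB : ∀ k, 1 ≤ k → k < n → F^[k] x ∉ B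
      · exact absurd (hcover x hxG hxB) hx
      · push_neg at hxB
        obtain ⟨k, h1, h2, h3⟩ := hxB
        exact Or.inr (mem_biUnion (Finset.mem_Ico.mpr ⟨h1, h2⟩) h3)
    · exact Or.inl hxG
  -- μ B is at most 1/N
  have hNB : (N : ℝ≥0∞) * μ B ≤ 1 := by
    have hdis : ∀ k l, k < l → l < N → Disjoint (F^[k] ⁻¹' B) (F^[l] ⁻¹' B) := by
      intro k l hkl hlN
      rw [Set.disjoint_left]
      intro x hxk hxl
      have he : F^[l] x = F^[l-k] (F^[k] x) := by
        rw [← Function.iterate_add_apply]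
        congr 1
        omega
      exact hBsep (l - k) (by omega) (by omega) _ hxk (by rw [← he]; exact hxl)
    have hper : ∀ k : ℕ, μ (F^[k] ⁻¹' B) = μ B := fun k =>
      (hT.iterate k).measure_preimage hBm.nullMeasurableSet
    have heq := measure_biUnion_finset (μ := μ) (s := Finset.range N)
      (f := fun k => F^[k] ⁻¹' B) ?_ ?_
    · calc (N : ℝ≥0∞) * μ B = ∑ k ∈ Finset.range N, μ (F^[k] ⁻¹' B) := by
            simp [hper, Finset.sum_const, Finset.card_range, nsmul_eq_mul]
        _ = μ (⋃ k ∈ Finset.range N, F^[k] ⁻¹' B) := heq.symm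
        _ ≤ 1 := prob_le_one
    · intro k hk l hl hkl
      rcases lt_or_gt_of_ne hkl with h | h
      · exact hdis k l h (Finset.mem_range.1 hl)
      · exact (hdis l k h (Finset.mem_range.1 hk)).symm
    · exact fun k _ => (T.measurable.iterate k) hBm
  -- final bound
  have hbound : μ ((⋃ i ∈ Finset.range n, F^[i] '' E)ᶜ) ≤ (↑(n - 1) : ℝ≥0∞) * μ B := by
    calc μ ((⋃ i ∈ Finset.range n, F^[i] '' E)ᶜ)
        ≤ μ (Gᶜ ∪ ⋃ k ∈ Finset.Ico 1 n, F^[k] ⁻¹' B) := measure_mono hcovc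
      _ ≤ μ Gᶜ + μ (⋃ k ∈ Finset.Ico 1 n, F^[k] ⁻¹' B) := measure_union_le _ _
      _ = μ (⋃ k ∈ Finset.Ico 1 n, F^[k] ⁻¹' B) := by rw [hGnull, zero_add]
      _ ≤ ∑ k ∈ Finset.Ico 1 n, μ (F^[k] ⁻¹' B) := measure_biUnion_finset_le _ _
      _ = (↑(n-1) : ℝ≥0∞) * μ B := by
          rw [Finset.sum_congr rfl
            (fun k _ => (hT.iterate k).measure_preimage hBm.nullMeasurableSet)]
          rw [Finset.sum_const, Nat.card_Ico]
          simp [nsmul_eq_mul]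
  refine ⟨E, hEm, hdisj, lt_of_le_of_lt hbound ?_⟩
  by_cases hB0 : μ B = 0
  · rw [hB0, mul_zero]
    exact ENNReal.ofReal_pos.mpr hε
  rcases eq_or_lt_of_le hn with h1 | h2
  · have hzero : n - 1 = 0 := by omega
    rw [hzero]
    simpa using ENNReal.ofReal_pos.mpr hε
  · have hBfin : μ B ≠ ⊤ := (measure_lt_top μ B).ne
    have hcast : ((n : ℝ≥0∞)) ≤ ENNReal.ofReal ε * N := by
      rw [← ENNReal.ofReal_natCast n, ← ENNReal.ofReal_natCast N,
        ← ENNReal.ofReal_mul hε.le]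
      refine ENNReal.ofReal_le_ofReal ?_
      have ha : (n : ℝ) / ε ≤ (⌈(n : ℝ) / ε⌉₊ : ℝ) := Nat.le_ceil _
      have hbN : ((⌈(n : ℝ) / ε⌉₊ : ℝ)) ≤ (N : ℝ) := by
        rw [hN]
        push_cast
        linarith
      calc (n : ℝ) = ε * ((n : ℝ) / ε) := by field_simp
        _ ≤ ε * N := by nlinarith
    calc (↑(n-1) : ℝ≥0∞) * μ B < (n : ℝ≥0∞) * μ B := by
          rw [mul_comm _ (μ B), mul_comm _ (μ B)]
          exact ENNReal.mul_lt_mul_right hB0 hBfin (by exact_mod_cast Nat.sub_lt (by omega) (by omega))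
      _ ≤ (ENNReal.ofReal ε * N) * μ B := mul_le_mul_left hcast _
      _ = ENNReal.ofReal ε * ((N : ℝ≥0∞) * μ B) := by ring
      _ ≤ ENNReal.ofReal ε * 1 := mul_le_mul_right hNB _
      _ = ENNReal.ofReal ε := mul_one _

end RokhlinAux


open MeasureTheory Set symmDiff Function
open scoped ENNReal

/-- Rokhlin's lemma and its consequence: if `T` is an aperiodic measure-preserving
automorphism of a standard atomless probability space, then for every `ε > 0` and `n ≥ 1`
there is a measurable set `E` with `E, TE, …, T^{n-1}E` pairwise disjoint whose union has
measure `> 1 - ε`; consequently `T` lies in the uniform-metric closure of the periodic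
automorphisms: for every `ε > 0` there is a measure-preserving `S` with `S^n = id` for
some `n ≥ 1` and `sup_A μ(TA ∆ SA) < ε`. -/
theorem rokhlin_and_uniform_approx_by_periodic {X : Type*} [MeasurableSpace X]
    [StandardBorelSpace X] [Nonempty X] (μ : Measure X) [IsProbabilityMeasure μ] [NullSingletonClass μ]
    (T : X ≃ᵐ X) (hT : MeasurePreserving T μ μ)
    (haper : ∀ n : ℕ, 1 ≤ n → μ {x | (⇑T)^[n] x = x} = 0) :
    (∀ ε > (0 : ℝ), ∀ n : ℕ, 1 ≤ n → ∃ E : Set X, MeasurableSet E ∧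
      (∀ i j : ℕ, i < n → j < n → i ≠ j → Disjoint ((⇑T)^[i] '' E) ((⇑T)^[j] '' E)) ∧
      μ ((⋃ i ∈ Finset.range n, (⇑T)^[i] '' E)ᶜ) < ENNReal.ofReal ε) ∧
    (∀ ε > (0 : ℝ), ∃ S : X ≃ᵐ X, MeasurePreserving S μ μ ∧
      (∃ n : ℕ, 1 ≤ n ∧ ∀ x : X, (⇑S)^[n] x = x) ∧
      (⨆ A : {s : Set X // MeasurableSet s},
        (μ ((T '' A.1) ∆ (S '' A.1))).toReal) < ε) := by
  classical
  refine ⟨fun ε hε n hn => rokhlin_tower μ T hT haper hε hn, fun ε hε => ?_⟩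
  set F : X → X := ⇑T with hF
  set Fi : X → X := ⇑T.symm with hFi
  have hinv : Function.LeftInverse Fi F := T.symm_apply_apply
  have hinv' : Function.LeftInverse F Fi := T.apply_symm_apply
  have hTs : MeasurePreserving Fi μ μ := hT.symm T
  -- choose the tower height
  set n : ℕ := ⌈8 / ε⌉₊ + 1 with hn
  have hn1 : 1 ≤ n := by omega
  have hn2 : 2 ≤ n := by
    have hc : 0 < ⌈8 / ε⌉₊ := Nat.ceil_pos.mpr (by positivity)
    omega
  have hn8 : (8 : ℝ) / ε ≤ (n : ℝ) := by
    refine le_trans (Nat.le_ceil _) ?_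
    rw [hn]
    push_cast
    linarith
  obtain ⟨E, hEm, hdisj, hcompl⟩ := rokhlin_tower μ T hT haper
    (show (0:ℝ) < ε/8 by linarith) hn1
  -- basic image facts
  have himg : ∀ (i : ℕ) (M : Set X), F^[i] '' M = Fi^[i] ⁻¹' M := fun i M =>
    congrFun (Set.image_eq_preimage_of_inverse (hinv.iterate i) (hinv'.iterate i)) M
  have himgm : ∀ i : ℕ, MeasurableSet (F^[i] '' E) := fun i => by
    rw [himg]
    exact (T.symm.measurable.iterate i) hEm
  have hmeasImg : ∀ (i : ℕ) (M : Set X), MeasurableSet M → μ (F^[i] '' M) = μ M := by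
    intro i M hM
    rw [himg]
    exact (hTs.iterate i).measure_preimage hM.nullMeasurableSet
  have hE0 : F^[0] '' E = E := by simp
  have hnotmem : ∀ {i j : ℕ}, i < n → j < n → i ≠ j → ∀ {x : X},
      x ∈ F^[i] '' E → x ∉ F^[j] '' E := by
    intro i j hi hj hij x hx
    exact (Set.disjoint_left.mp (hdisj _ _ hi hj hij)) hx
  -- the pieces
  set Top : Set X := F^[n-1] '' E with hTop
  set Mid : Set X := ⋃ i ∈ Finset.range (n-1), F^[i] '' E with hMid
  set Mid2 : Set X := ⋃ i ∈ Finset.Ico 1 n, F^[i] '' E with hMid2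
  set Tower : Set X := ⋃ i ∈ Finset.range n, F^[i] '' E with hTower
  have hTopm : MeasurableSet Top := himgm _
  have hMidm : MeasurableSet Mid :=
    MeasurableSet.biUnion (Finset.range (n-1)).countable_toSet fun i _ => himgm i
  have hMid2m : MeasurableSet Mid2 :=
    MeasurableSet.biUnion (Finset.Ico 1 n).countable_toSet fun i _ => himgm i
  have hTowerm : MeasurableSet Tower :=
    MeasurableSet.biUnion (Finset.range n).countable_toSet fun i _ => himgm i
  have hTower_eq : Tower = Mid ∪ Top := by
    rw [hTower, hMid, hTop]
    ext x
    simp only [mem_union, mem_iUnion, Finset.mem_range, exists_prop]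
    constructor
    · rintro ⟨i, hi, hx⟩
      rcases Nat.lt_or_ge i (n-1) with h | h
      · exact Or.inl ⟨i, h, hx⟩
      · have : i = n - 1 := by omega
        subst this
        exact Or.inr hx
    · rintro (⟨i, hi, hx⟩ | hx)
      · exact ⟨i, by omega, hx⟩
      · exact ⟨n-1, by omega, hx⟩
  have hTop_Mid : ∀ x, x ∈ Top → x ∉ Mid := by
    intro x hx hm
    rw [hMid] at hm
    rw [mem_iUnion] at hm
    obtain ⟨i, hm⟩ := hm
    rw [mem_iUnion] at hm
    obtain ⟨hi, hm⟩ := hm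
    rw [Finset.mem_range] at hi
    exact hnotmem (by omega) (by omega) (by omega) hx hm
  have hE_Mid2 : ∀ x, x ∈ E → x ∉ Mid2 := by
    intro x hx hm
    rw [hMid2] at hm
    rw [mem_iUnion] at hm
    obtain ⟨i, hm⟩ := hm
    rw [mem_iUnion] at hm
    obtain ⟨hi, hm⟩ := hm
    rw [Finset.mem_Ico] at hi
    refine hnotmem (by omega : (0:ℕ) < n) (by omega) (by omega) ?_ hm
    rwa [hE0]
  have hE_sub : E ⊆ Tower := by
    intro x hx
    rw [hTower]
    refine mem_biUnion (x := 0) (Finset.mem_range.mpr (by omega)) ?_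
    rwa [hE0]
  have hTop_sub2 : Top ⊆ Mid2 := by
    intro x hx
    exact mem_biUnion (x := n - 1) (Finset.mem_Ico.mpr ⟨by omega, by omega⟩) hx
  have hMid2_sub : Mid2 ⊆ Tower := by
    intro x hx
    rw [hMid2, mem_iUnion] at hx
    obtain ⟨i, hx⟩ := hx
    rw [mem_iUnion] at hx
    obtain ⟨hi, hx⟩ := hx
    rw [Finset.mem_Ico] at hi
    exact mem_biUnion (Finset.mem_range.mpr (by omega)) hx
  have hMid_sub : Mid ⊆ Tower := by
    rw [hTower_eq]
    exact subset_union_left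
  have hTop_sub : Top ⊆ Tower := by
    rw [hTower_eq]
    exact subset_union_right
  have hMid_split : ∀ x, x ∈ Mid → x ∈ E ∨ x ∈ Mid2 := by
    intro x hx
    rw [hMid, mem_iUnion] at hx
    obtain ⟨i, hx⟩ := hx
    rw [mem_iUnion] at hx
    obtain ⟨hi, hx⟩ := hx
    rw [Finset.mem_range] at hi
    rcases Nat.eq_zero_or_pos i with rfl | hpos
    · left; rwa [hE0] at hx
    · right; exact mem_biUnion (Finset.mem_Ico.mpr ⟨by omega, by omega⟩) hx
  have hEMid2_Tower : E ∪ Mid2 = Tower := by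
    apply Set.eq_of_subset_of_subset
    · exact union_subset hE_sub hMid2_sub
    · intro x hx
      rw [hTower, mem_iUnion] at hx
      obtain ⟨i, hx⟩ := hx
      rw [mem_iUnion] at hx
      obtain ⟨hi, hx⟩ := hx
      rw [Finset.mem_range] at hi
      rcases Nat.eq_zero_or_pos i with rfl | hpos
      · left; rwa [hE0] at hx
      · right; exact mem_biUnion (Finset.mem_Ico.mpr ⟨by omega, by omega⟩) hx
  -- the periodic map
  set f : X → X := fun x => if x ∈ Top then Fi^[n-1] x else if x ∈ Mid then F x else x
    with hfdef
  set g : X → X := fun x => if x ∈ E then F^[n-1] x else if x ∈ Mid2 then Fi x else x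
    with hgdef
  -- basic evaluation lemmas
  have hfTop : ∀ x ∈ Top, f x = Fi^[n-1] x := by
    intro x hx
    simp only [hfdef, if_pos hx]
  have hfMid : ∀ x ∈ Mid, f x = F x := by
    intro x hx
    simp only [hfdef, if_neg (fun h => hTop_Mid x h hx), if_pos hx]
  have hfRest : ∀ x, x ∉ Tower → f x = x := by
    intro x hx
    simp only [hfdef, if_neg (fun h => hx (hTop_sub h)), if_neg (fun h => hx (hMid_sub h))]
  have hgE : ∀ x ∈ E, g x = F^[n-1] x := by
    intro x hx
    simp only [hgdef, if_pos hx]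
  have hgMid2 : ∀ x ∈ Mid2, g x = Fi x := by
    intro x hx
    simp only [hgdef, if_neg (fun h => hE_Mid2 x h hx), if_pos hx]
  have hgRest : ∀ x, x ∉ Tower → g x = x := by
    intro x hx
    simp only [hgdef, if_neg (fun h => hx (hE_sub h)), if_neg (fun h => hx (hMid2_sub h))]
  -- inverse properties
  have hgf : Function.LeftInverse g f := by
    intro x
    by_cases hxT : x ∈ Top
    · obtain ⟨e, heE, rfl⟩ := hxT
      rw [hfTop _ (⟨e, heE, rfl⟩ : F^[n-1] e ∈ Top)]
      rw [hinv.iterate (n-1) e]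
      exact hgE e heE ▸ rfl
    · by_cases hxM : x ∈ Mid
      · rw [hfMid x hxM]
        have hxM' : x ∈ Mid := hxM
        rw [hMid, mem_iUnion] at hxM'
        obtain ⟨i, hx⟩ := hxM'
        rw [mem_iUnion] at hx
        obtain ⟨hi, e, heE, rfl⟩ := hx
        rw [Finset.mem_range] at hi
        have hFx : F (F^[i] e) = F^[i+1] e := (Function.iterate_succ_apply' F i e).symm
        rw [hFx]
        have hmem : F^[i+1] e ∈ Mid2 :=
          mem_biUnion (Finset.mem_Ico.mpr ⟨by omega, by omega⟩) ⟨e, heE, rfl⟩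
        rw [hgMid2 _ hmem]
        rw [← hFx, hinv (F^[i] e)]
      · have hxTow : x ∉ Tower := by
          rw [hTower_eq]
          rintro (h | h)
          · exact hxM h
          · exact hxT h
        rw [hfRest x hxTow, hgRest x hxTow]
  have hfg : Function.RightInverse g f := by
    intro y
    by_cases hyE : y ∈ E
    · rw [hgE y hyE]
      have hmem : F^[n-1] y ∈ Top := ⟨y, hyE, rfl⟩
      rw [hfTop _ hmem, hinv.iterate (n-1) y]
    · by_cases hyM : y ∈ Mid2
      · rw [hgMid2 y hyM]
        have hyM' := hyM
        rw [hMid2, mem_iUnion] at hyM'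
        obtain ⟨i, hy⟩ := hyM'
        rw [mem_iUnion] at hy
        obtain ⟨hi, e, heE, rfl⟩ := hy
        rw [Finset.mem_Ico] at hi
        have hFiy : Fi (F^[i] e) = F^[i-1] e := by
          have h1 := iter_cancelA hinv (a := 1) (b := i) (by omega) e
          simpa using h1
        rw [hFiy]
        have hmemM : F^[i-1] e ∈ Mid :=
          mem_biUnion (Finset.mem_range.mpr (by omega)) ⟨e, heE, rfl⟩
        rw [hfMid _ hmemM]
        obtain ⟨j, rfl⟩ : ∃ j, i = j + 1 := ⟨i - 1, by omega⟩
        simp only [Nat.add_sub_cancel]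
        exact (Function.iterate_succ_apply' F j e).symm
      · have hyTow : y ∉ Tower := by
          rw [← hEMid2_Tower]
          rintro (h | h)
          · exact hyE h
          · exact hyM h
        have hyTop : y ∉ Top := fun h => hyM (hTop_sub2 h)
        rw [hgRest y hyTow, hfRest y hyTow]
  -- measurability
  have hfmeas : Measurable f :=
    Measurable.ite hTopm (T.symm.measurable.iterate (n-1))
      (Measurable.ite hMidm T.measurable measurable_id)
  have hgmeas : Measurable g :=
    Measurable.ite hEm (T.measurable.iterate (n-1))
      (Measurable.ite hMid2m T.symm.measurable measurable_id)
  set S : X ≃ᵐ X :=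
    { toEquiv := ⟨f, g, hgf, hfg⟩
      measurable_toFun := hfmeas
      measurable_invFun := hgmeas } with hS
  have hScoe : ⇑S = f := rfl
  have hSsymmcoe : ⇑S.symm = g := rfl
  -- measure preservation
  have hkey : ∀ A : Set X, MeasurableSet A → μ (f ⁻¹' A) = μ A := by
    intro A hA
    have hdecomp : f ⁻¹' A =
        (Top ∩ Fi^[n-1] ⁻¹' A) ∪ ((Mid ∩ F ⁻¹' A) ∪ (Towerᶜ ∩ A)) := by
      ext x
      simp only [mem_preimage, mem_union, mem_inter_iff, mem_compl_iff]
      by_cases hxT : x ∈ Top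
      · simp only [hfdef, if_pos hxT]
        constructor
        · intro h; exact Or.inl ⟨hxT, h⟩
        · rintro (⟨-, h⟩ | ⟨h, -⟩ | ⟨h, -⟩)
          · exact h
          · exact absurd h (hTop_Mid x hxT)
          · exact absurd (hTop_sub hxT) h
      · by_cases hxM : x ∈ Mid
        · simp only [hfdef, if_neg hxT, if_pos hxM]
          constructor
          · intro h; exact Or.inr (Or.inl ⟨hxM, h⟩)
          · rintro (⟨h, -⟩ | ⟨-, h⟩ | ⟨h, -⟩)
            · exact absurd h hxT
            · exact h
            · exact absurd (hMid_sub hxM) h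
        · have hxTow : x ∉ Tower := by
            rw [hTower_eq]
            rintro (h | h)
            · exact hxM h
            · exact hxT h
          simp only [hfdef, if_neg hxT, if_neg hxM]
          constructor
          · intro h; exact Or.inr (Or.inr ⟨hxTow, h⟩)
          · rintro (⟨h, -⟩ | ⟨h, -⟩ | ⟨-, h⟩)
            · exact absurd h hxT
            · exact absurd h hxM
            · exact h
    have hTopA : Top ∩ Fi^[n-1] ⁻¹' A = F^[n-1] '' (E ∩ A) := by
      ext x
      constructor
      · rintro ⟨⟨e, heE, rfl⟩, hA'⟩
        rw [mem_preimage, hinv.iterate (n-1) e] at hA'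
        exact ⟨e, ⟨heE, hA'⟩, rfl⟩
      · rintro ⟨e, ⟨heE, heA⟩, rfl⟩
        exact ⟨⟨e, heE, rfl⟩, by rw [mem_preimage, hinv.iterate (n-1) e]; exact heA⟩
    have hFMid : F '' Mid = Mid2 := by
      ext x
      constructor
      · rintro ⟨z, hz, rfl⟩
        rw [hMid, mem_iUnion] at hz
        obtain ⟨i, hz⟩ := hz
        rw [mem_iUnion] at hz
        obtain ⟨hi, e, heE, rfl⟩ := hz
        rw [Finset.mem_range] at hi
        refine mem_biUnion (x := i + 1) (Finset.mem_Ico.mpr ⟨by omega, by omega⟩) ⟨e, heE, ?_⟩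
        exact Function.iterate_succ_apply' F i e
      · intro hx
        rw [hMid2, mem_iUnion] at hx
        obtain ⟨i, hx⟩ := hx
        rw [mem_iUnion] at hx
        obtain ⟨hi, e, heE, rfl⟩ := hx
        rw [Finset.mem_Ico] at hi
        obtain ⟨j, rfl⟩ : ∃ j, i = j + 1 := ⟨i - 1, by omega⟩
        refine ⟨F^[j] e, mem_biUnion (Finset.mem_range.mpr (by omega)) ⟨e, heE, rfl⟩, ?_⟩
        exact (Function.iterate_succ_apply' F j e).symm
    have hMidA : F '' (Mid ∩ F ⁻¹' A) = Mid2 ∩ A := by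
      rw [Set.image_inter_preimage, hFMid]
    have hm1 : μ (Top ∩ Fi^[n-1] ⁻¹' A) = μ (E ∩ A) := by
      rw [hTopA]
      exact hmeasImg _ _ (hEm.inter hA)
    have hm2 : μ (Mid ∩ F ⁻¹' A) = μ (Mid2 ∩ A) := by
      have h := hmeasImg 1 (Mid ∩ F ⁻¹' A) (hMidm.inter (T.measurable hA))
      rw [Function.iterate_one, hMidA] at h
      exact h.symm
    -- additivity on both sides
    have hmeas1 : MeasurableSet (Mid ∩ F ⁻¹' A) := hMidm.inter (T.measurable hA)
    have hmeas2 : MeasurableSet (Towerᶜ ∩ A) := hTowerm.compl.inter hA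
    have hd1 : Disjoint (Top ∩ Fi^[n-1] ⁻¹' A) ((Mid ∩ F ⁻¹' A) ∪ (Towerᶜ ∩ A)) := by
      rw [Set.disjoint_left]
      rintro x ⟨hxT, -⟩ (⟨hxM, -⟩ | ⟨hxTow, -⟩)
      · exact hTop_Mid x hxT hxM
      · exact hxTow (hTop_sub hxT)
    have hd2 : Disjoint (Mid ∩ F ⁻¹' A) (Towerᶜ ∩ A) := by
      rw [Set.disjoint_left]
      rintro x ⟨hxM, -⟩ ⟨hxTow, -⟩
      exact hxTow (hMid_sub hxM)
    have hd3 : Disjoint (E ∩ A) ((Mid2 ∩ A) ∪ (Towerᶜ ∩ A)) := by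
      rw [Set.disjoint_left]
      rintro x ⟨hxE, -⟩ (⟨hxM, -⟩ | ⟨hxTow, -⟩)
      · exact hE_Mid2 x hxE hxM
      · exact hxTow (hE_sub hxE)
    have hd4 : Disjoint (Mid2 ∩ A) (Towerᶜ ∩ A) := by
      rw [Set.disjoint_left]
      rintro x ⟨hxM, -⟩ ⟨hxTow, -⟩
      exact hxTow (hMid2_sub hxM)
    have hAsplit : A = (E ∩ A) ∪ ((Mid2 ∩ A) ∪ (Towerᶜ ∩ A)) := by
      ext x
      constructor
      · intro hx
        by_cases h1 : x ∈ E
        · exact Or.inl ⟨h1, hx⟩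
        · by_cases h2 : x ∈ Mid2
          · exact Or.inr (Or.inl ⟨h2, hx⟩)
          · have h3 : x ∉ Tower := by
              rw [← hEMid2_Tower]
              rintro (h | h)
              · exact h1 h
              · exact h2 h
            exact Or.inr (Or.inr ⟨h3, hx⟩)
      · rintro (⟨-, hx⟩ | ⟨-, hx⟩ | ⟨-, hx⟩) <;> exact hx
    rw [hdecomp, measure_union hd1 (hmeas1.union hmeas2), measure_union hd2 hmeas2,
      hm1, hm2]
    conv_rhs => rw [hAsplit]
    rw [measure_union hd3 ((hMid2m.inter hA).union hmeas2),
      measure_union hd4 hmeas2]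
  have hSmeas : Measurable (⇑S) := by rw [hScoe]; exact hfmeas
  have hSmp : MeasurePreserving (⇑S) μ μ := by
    constructor
    · exact hSmeas
    · refine Measure.ext fun A hA => ?_
      rw [Measure.map_apply hSmeas hA, hScoe]
      simp only [hkey A hA]
  -- periodicity
  have hfE : ∀ (j : ℕ), j ≤ n-1 → ∀ e ∈ E, f^[j] e = F^[j] e := by
    intro j
    induction j with
    | zero => intro _ e _; rfl
    | succ k ih =>
      intro hk e heE
      rw [Function.iterate_succ_apply', ih (by omega) e heE]
      have hmem : F^[k] e ∈ Mid :=
        mem_biUnion (Finset.mem_range.mpr (by omega)) ⟨e, heE, rfl⟩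
      rw [hfMid _ hmem]
      exact (Function.iterate_succ_apply' F k e).symm
  have hfn : ∀ e ∈ E, f^[n] e = e := by
    intro e heE
    have h1 : f^[n] e = f (f^[n-1] e) := by
      conv_lhs => rw [show n = (n-1) + 1 from by omega]
      exact Function.iterate_succ_apply' f (n-1) e
    rw [h1, hfE (n-1) le_rfl e heE, hfTop _ ⟨e, heE, rfl⟩, hinv.iterate (n-1) e]
  have hper : ∀ x : X, (⇑S)^[n] x = x := by
    intro x
    rw [hScoe]
    by_cases hxTow : x ∈ Tower
    · rw [hTower, mem_iUnion] at hxTow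
      obtain ⟨i, hx⟩ := hxTow
      rw [mem_iUnion] at hx
      obtain ⟨hi, e, heE, rfl⟩ := hx
      rw [Finset.mem_range] at hi
      have h1 : F^[i] e = f^[i] e := (hfE i (by omega) e heE).symm
      rw [h1]
      calc f^[n] (f^[i] e) = f^[n + i] e := (Function.iterate_add_apply f n i e).symm
        _ = f^[i + n] e := by rw [Nat.add_comm]
        _ = f^[i] (f^[n] e) := Function.iterate_add_apply f i n e
        _ = f^[i] e := by rw [hfn e heE]
    · exact Function.iterate_fixed (hfRest x hxTow) n
  -- the deviation set
  set D : Set X := Top ∪ Towerᶜ with hD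
  have hDm : MeasurableSet D := hTopm.union hTowerm.compl
  have hDset : ∀ x, f x ≠ F x → x ∈ D := by
    intro x hx
    by_cases hT1 : x ∈ Top
    · exact Or.inl hT1
    · by_cases hM : x ∈ Mid
      · exact absurd (hfMid x hM) hx
      · refine Or.inr ?_
        rw [hTower_eq]
        rintro (h | h)
        · exact hM h
        · exact hT1 h
  have hfimg : ∀ M : Set X, MeasurableSet M → μ (f '' M) = μ M := by
    intro M hM
    have h1 : f '' M = g ⁻¹' M := congrFun (Set.image_eq_preimage_of_inverse hgf hfg) M
    rw [h1]
    have h2 := (hSmp.symm S).measure_preimage hM.nullMeasurableSet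
    rwa [hSsymmcoe] at h2
  have hFimg : ∀ M : Set X, MeasurableSet M → μ (F '' M) = μ M := by
    intro M hM
    have h1 := hmeasImg 1 M hM
    rwa [Function.iterate_one] at h1
  have hTopE : μ Top = μ E := by
    rw [hTop]
    exact hmeasImg (n-1) E hEm
  have hnE : (n : ℝ≥0∞) * μ E ≤ 1 := by
    have heq := measure_biUnion_finset (μ := μ) (s := Finset.range n)
      (f := fun i => F^[i] '' E) ?_ ?_
    · calc (n : ℝ≥0∞) * μ E = ∑ i ∈ Finset.range n, μ (F^[i] '' E) := by
            rw [Finset.sum_congr rfl (fun i _ => hmeasImg i E hEm), Finset.sum_const,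
              Finset.card_range]
            simp [nsmul_eq_mul]
        _ = μ (⋃ i ∈ Finset.range n, F^[i] '' E) := heq.symm
        _ ≤ 1 := prob_le_one
    · intro i hi j hj hij
      exact hdisj i j (Finset.mem_range.1 hi) (Finset.mem_range.1 hj) hij
    · exact fun i _ => himgm i
  have hμD : μ D ≤ μ E + μ Towerᶜ := by
    calc μ D ≤ μ Top + μ Towerᶜ := measure_union_le _ _
      _ = μ E + μ Towerᶜ := by rw [hTopE]
  have hperA : ∀ A : Set X, MeasurableSet A →
      μ ((F '' A) ∆ (f '' A)) ≤ 2 * (μ E + μ Towerᶜ) := by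
    intro A hA
    have hsub : (F '' A) ∆ (f '' A) ⊆ (F '' (A ∩ D)) ∪ (f '' (A ∩ D)) := by
      intro y hy
      rw [Set.mem_symmDiff] at hy
      rcases hy with ⟨⟨a, haA, rfl⟩, hnot⟩ | ⟨⟨a, haA, rfl⟩, hnot⟩
      · have haD : a ∈ D := hDset a (fun h => hnot ⟨a, haA, h⟩)
        exact Or.inl ⟨a, ⟨haA, haD⟩, rfl⟩
      · have haD : a ∈ D := hDset a (fun h => hnot ⟨a, haA, h.symm⟩)
        exact Or.inr ⟨a, ⟨haA, haD⟩, rfl⟩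
    calc μ ((F '' A) ∆ (f '' A)) ≤ μ (F '' (A ∩ D)) + μ (f '' (A ∩ D)) :=
          le_trans (measure_mono hsub) (measure_union_le _ _)
      _ = μ (A ∩ D) + μ (A ∩ D) := by
          rw [hFimg _ (hA.inter hDm), hfimg _ (hA.inter hDm)]
      _ ≤ μ D + μ D := by
          have hAD : μ (A ∩ D) ≤ μ D := measure_mono inter_subset_right
          exact add_le_add hAD hAD
      _ = 2 * μ D := by ring
      _ ≤ 2 * (μ E + μ Towerᶜ) := by gcongr
  have hnpos : (0 : ℝ) < n := by
    have : (1 : ℕ) ≤ n := hn1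
    exact_mod_cast Nat.pos_of_ne_zero (by omega)
  have hsup_le : ∀ A : {s : Set X // MeasurableSet s},
      (μ ((T '' A.1) ∆ (S '' A.1))).toReal ≤ ε/2 := by
    intro A
    have h1 : μ ((F '' A.1) ∆ (f '' A.1)) ≤ 2 * (μ E + μ Towerᶜ) := hperA A.1 A.2
    have hfin : (2 : ℝ≥0∞) * (μ E + μ Towerᶜ) ≠ ⊤ :=
      ENNReal.mul_ne_top (by norm_num)
        (ENNReal.add_ne_top.mpr ⟨measure_ne_top μ E, measure_ne_top μ _⟩)
    have h2 : (μ ((F '' A.1) ∆ (f '' A.1))).toReal ≤ (2 * (μ E + μ Towerᶜ)).toReal :=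
      ENNReal.toReal_mono hfin h1
    have h3 : (2 * (μ E + μ Towerᶜ)).toReal
        = 2 * ((μ E).toReal + (μ Towerᶜ).toReal) := by
      rw [ENNReal.toReal_mul, ENNReal.toReal_add (measure_ne_top μ E) (measure_ne_top μ _)]
      norm_num
    have hE8 : (μ E).toReal ≤ ε/8 := by
      have h4 : (n : ℝ) * (μ E).toReal ≤ 1 := by
        have h5 := ENNReal.toReal_mono (by norm_num : (1 : ℝ≥0∞) ≠ ⊤) hnE
        rwa [ENNReal.toReal_mul, ENNReal.toReal_natCast, ENNReal.toReal_one] at h5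
      have h5 : (μ E).toReal ≤ 1 / n := by
        rw [le_div_iff₀ hnpos, mul_comm]
        exact h4
      have hε8 : (8 : ℝ) ≤ n * ε := by
        rw [div_le_iff₀ (by linarith : (0:ℝ) < ε)] at hn8
        exact hn8
      have h6 : (1 : ℝ)/n ≤ ε/8 := by
        rw [div_le_div_iff₀ hnpos (by norm_num : (0:ℝ) < 8)]
        nlinarith
      linarith
    have hT8 : (μ ((⋃ i ∈ Finset.range n, F^[i] '' E)ᶜ)).toReal ≤ ε/8 := by
      have h7 := ENNReal.toReal_mono (by simp : ENNReal.ofReal (ε/8) ≠ ⊤) hcompl.le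
      rwa [ENNReal.toReal_ofReal (by linarith)] at h7
    have hT8' : (μ Towerᶜ).toReal ≤ ε/8 := hT8
    calc (μ ((T '' A.1) ∆ (S '' A.1))).toReal
        = (μ ((F '' A.1) ∆ (f '' A.1))).toReal := rfl
      _ ≤ 2 * ((μ E).toReal + (μ Towerᶜ).toReal) := by rw [← h3]; exact h2
      _ ≤ 2 * (ε/8 + ε/8) := by linarith [ENNReal.toReal_nonneg (a := μ E)]
      _ ≤ ε/2 := by linarith
  haveI : Nonempty {s : Set X // MeasurableSet s} := ⟨⟨∅, MeasurableSet.empty⟩⟩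
  exact ⟨S, hSmp, ⟨n, hn1, hper⟩,
    lt_of_le_of_lt (ciSup_le hsup_le) (by linarith)⟩
end
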